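/- Normal form theorem for XPath↓⁻: let φ be an XP⁻-consistent node expression of XPath↓⁻ with dd(φ)=n; then XP⁻⊢φ≡⋁_{1≤i≤k}φᵢ for some φ₁,…,φ_k∈N̂ₙ. Let α be an XP⁻-consistent path expression of XPath↓⁻ with dd(α)=n; then XP⁻⊢α≡⋃_{1≤i≤k}[φᵢ]αᵢ for some α₁,…,α_k∈P̂ₙ and φ₁,…,φ_k∈N̂ₙ; moreover, if α is ε or starts with ↓, then XP⁻⊢α≡⋃_{1≤i≤k}αᵢ for some α₁,…,α_k∈P̂ₙ. -/

import Mathlib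

attribute [local instance] Classical.propDecidable

mutual
/-- Path expressions of `XPath↓⁻` (no inequality tests in the language). -/
inductive PathExpr (A : Type) : Type
  | eps : PathExpr A
  | down : PathExpr A
  | test : NodeExpr A → PathExpr A
  | comp : PathExpr A → PathExpr A → PathExpr A
  | union : PathExpr A → PathExpr A → PathExpr A

/-- Node expressions of `XPath↓⁻` (no inequality tests in the language). -/
inductive NodeExpr (A : Type) : Type
  | lab : A → NodeExpr A
  | neg : NodeExpr A → NodeExpr A
  | conj : NodeExpr A → NodeExpr A → NodeExpr A
  | diam : PathExpr A → NodeExpr A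
  | eqTest : PathExpr A → PathExpr A → NodeExpr A
end

namespace XPathMinus

variable {A : Type}

/-- Defined disjunction `φ ∨ ψ := ¬(¬φ ∧ ¬ψ)`. -/
def nOr (φ ψ : NodeExpr A) : NodeExpr A := .neg (.conj (.neg φ) (.neg ψ))

/-- `⊤ := ⟨ε⟩`. -/
def topN : NodeExpr A := .diam .eps

/-- `⊥ := ¬⊤`. -/
def botN : NodeExpr A := .neg topN

/-- `⊥̄ := [¬⟨ε⟩]`. -/
def botP : PathExpr A := .test (.neg (.diam .eps))

def bigOr (l : List (NodeExpr A)) : NodeExpr A := l.foldr nOr botN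

def bigUnion (l : List (PathExpr A)) : PathExpr A := l.foldr PathExpr.union botP

/-- A data tree: a tree (connected, acyclic, unique parents except the root)
whose nodes carry labels from `A`, together with a partition of the nodes
(presented as an equivalence relation `eqd`). -/
structure DataTree (A : Type) where
  X : Type
  child : X → X → Prop
  root : X
  label : X → A
  eqd : X → X → Prop
  eqd_equiv : Equivalence eqd
  parent_unique : ∀ ⦃x y z : X⦄, child x z → child y z → x = y
  root_no_parent : ∀ x : X, ¬ child x root
  reach : ∀ x : X, Relation.ReflTransGen child root x
  acyclic : ∀ x : X, ¬ Relation.TransGen child x x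

mutual
/-- Semantics of path expressions. -/
def psem (T : DataTree A) : PathExpr A → T.X → T.X → Prop
  | .eps, x, y => x = y
  | .down, x, y => T.child x y
  | .test φ, x, y => x = y ∧ nsem T φ x
  | .comp α β, x, z => ∃ y, psem T α x y ∧ psem T β y z
  | .union α β, x, y => psem T α x y ∨ psem T β x y

/-- Semantics of node expressions. -/
def nsem (T : DataTree A) : NodeExpr A → T.X → Prop
  | .lab a, x => T.label x = a
  | .neg φ, x => ¬ nsem T φ x
  | .conj φ ψ, x => nsem T φ x ∧ nsem T ψ x
  | .diam α, x => ∃ y, psem T α x y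
  | .eqTest α β, x => ∃ y z, psem T α x y ∧ psem T β x z ∧ T.eqd y z
end

/-- Semantic equivalence of node expressions: same denotation in every data tree. -/
def nodeValid (φ ψ : NodeExpr A) : Prop :=
  ∀ (T : DataTree A) (x : T.X), nsem T φ x ↔ nsem T ψ x

/-- Semantic equivalence of path expressions: same denotation in every data tree. -/
def pathValid (α β : PathExpr A) : Prop :=
  ∀ (T : DataTree A) (x y : T.X), psem T α x y ↔ psem T β x y

mutual
/-- Derivability of node equivalences in the axiomatic system `XP⁻`. -/
inductive NDer {A : Type} [Fintype A] : NodeExpr A → NodeExpr A → Prop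
  | refl (φ : NodeExpr A) : NDer φ φ
  | symm {φ ψ : NodeExpr A} : NDer φ ψ → NDer ψ φ
  | trans {φ ψ ρ : NodeExpr A} : NDer φ ψ → NDer ψ ρ → NDer φ ρ
  | congr_neg {φ ψ : NodeExpr A} : NDer φ ψ → NDer (.neg φ) (.neg ψ)
  | congr_conj {φ φ' ψ ψ' : NodeExpr A} :
      NDer φ φ' → NDer ψ ψ' → NDer (.conj φ ψ) (.conj φ' ψ')
  | congr_diam {α β : PathExpr A} : PDer α β → NDer (.diam α) (.diam β)
  | congr_eqTest {α α' β β' : PathExpr A} :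
      PDer α α' → PDer β β' → NDer (.eqTest α β) (.eqTest α' β')
  | lbAx1 : NDer topN (bigOr ((Finset.univ : Finset A).toList.map NodeExpr.lab))
  | lbAx2 {a b : A} : a ≠ b → NDer botN (.conj (.lab a) (.lab b))
  | ndAx1 (φ ψ : NodeExpr A) :
      NDer φ (nOr (.neg (nOr (.neg φ) ψ)) (.neg (nOr (.neg φ) (.neg ψ))))
  | ndAx2 (φ : NodeExpr A) : NDer (.diam (.test φ)) φ
  | ndAx3 (α β : PathExpr A) : NDer (.diam (.union α β)) (nOr (.diam α) (.diam β))
  | ndAx4 (α β : PathExpr A) : NDer (.diam (.comp α β)) (.diam (.comp α (.test (.diam β))))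
  | eqAx1 (α β : PathExpr A) : NDer (.eqTest α β) (.eqTest β α)
  | eqAx2 (α β γ : PathExpr A) :
      NDer (.eqTest (.union α β) γ) (nOr (.eqTest α γ) (.eqTest β γ))
  | eqAx3 (φ : NodeExpr A) (α β : PathExpr A) :
      NDer (.conj φ (.eqTest α β)) (.eqTest (.comp (.test φ) α) β)
  | eqAx4 (α β : PathExpr A) : NDer (nOr (.eqTest α β) (.diam α)) (.diam α)
  | eqAx5 (γ α β : PathExpr A) :
      NDer (nOr (.diam (.comp γ (.test (.eqTest α β)))) (.eqTest (.comp γ α) (.comp γ β)))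
        (.eqTest (.comp γ α) (.comp γ β))
  | eqAx6 (α : PathExpr A) : NDer (.eqTest α α) (.diam α)
  | eqAx7 (α β : PathExpr A) :
      NDer (nOr (.conj (.eqTest α .eps) (.eqTest β .eps)) (.eqTest α β)) (.eqTest α β)
  | eqAx8 (α β γ : PathExpr A) :
      NDer (nOr (.eqTest α (.comp β (.test (.eqTest .eps γ)))) (.eqTest α (.comp β γ)))
        (.eqTest α (.comp β γ))

/-- Derivability of path equivalences in the axiomatic system `XP⁻`. -/
inductive PDer {A : Type} [Fintype A] : PathExpr A → PathExpr A → Prop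
  | refl (α : PathExpr A) : PDer α α
  | symm {α β : PathExpr A} : PDer α β → PDer β α
  | trans {α β γ : PathExpr A} : PDer α β → PDer β γ → PDer α γ
  | congr_test {φ ψ : NodeExpr A} : NDer φ ψ → PDer (.test φ) (.test ψ)
  | congr_comp {α α' β β' : PathExpr A} :
      PDer α α' → PDer β β' → PDer (.comp α β) (.comp α' β')
  | congr_union {α α' β β' : PathExpr A} :
      PDer α α' → PDer β β' → PDer (.union α β) (.union α' β')
  | prAx1 (α β : PathExpr A) : PDer (.comp (.comp α (.test (.neg (.diam β)))) β) botP
  | prAx2 : PDer (.test topN) (.eps : PathExpr A)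
  | prAx3 (φ ψ : NodeExpr A) : PDer (.test (nOr φ ψ)) (.union (.test φ) (.test ψ))
  | isAx1 (α β γ : PathExpr A) : PDer (.union (.union α β) γ) (.union α (.union β γ))
  | isAx2 (α β : PathExpr A) : PDer (.union α β) (.union β α)
  | isAx3 (α : PathExpr A) : PDer (.union α α) α
  | isAx4 (α β γ : PathExpr A) : PDer (.comp α (.comp β γ)) (.comp (.comp α β) γ)
  | isAx5l (α : PathExpr A) : PDer (.comp .eps α) α
  | isAx5r (α : PathExpr A) : PDer (.comp α .eps) α
  | isAx6l (α β γ : PathExpr A) :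
      PDer (.comp α (.union β γ)) (.union (.comp α β) (.comp α γ))
  | isAx6r (α β γ : PathExpr A) :
      PDer (.comp (.union α β) γ) (.union (.comp α γ) (.comp β γ))
  | isAx7 (α : PathExpr A) : PDer (.union botP α) α
end

/-- A node expression is `XP⁻`-consistent if it is not provably equivalent to `⊥`. -/
def NConsistent [Fintype A] (φ : NodeExpr A) : Prop := ¬ NDer φ botN

/-- A path expression is `XP⁻`-consistent if it is not provably equivalent to `⊥̄`. -/
def PConsistent [Fintype A] (α : PathExpr A) : Prop := ¬ PDer α botP

/-- The normal form `a ∧ ⋀_{d ∈ C} d ∧ ⋀_{d ∈ D∖C} ¬d`, built along the canonical listing `D`. -/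
noncomputable def mkNF (a : A) (C D : List (NodeExpr A)) : NodeExpr A :=
  D.foldl (fun acc d => .conj acc (if d ∈ C then d else .neg d)) (.lab a)

/-- The canonical lists of normal-form path expressions (first component)
and normal-form node expressions (second component) at each level. -/
noncomputable def NF (A : Type) [Fintype A] : ℕ → List (PathExpr A) × List (NodeExpr A)
  | 0 =>
    ([.eps],
      (Finset.univ : Finset A).toList.map fun a =>
        NodeExpr.conj (.lab a) (.eqTest .eps .eps))
  | n+1 =>
    let P := (NF A n).1
    let N := (NF A n).2
    let P' : List (PathExpr A) :=
      .eps :: N.flatMap fun ψ => P.map fun β => PathExpr.comp .down (.comp (.test ψ) β)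
    let D : List (NodeExpr A) :=
      P'.flatMap fun α => P'.map fun β => NodeExpr.eqTest α β
    let cands : List (NodeExpr A) :=
      D.sublists.flatMap fun C => (Finset.univ : Finset A).toList.map fun a => mkNF a C D
    (P', cands.filter fun φ => decide (NConsistent φ))

/-- `P̂ₙ`: normal-form path expressions of level `n`. -/
noncomputable def Pnf (A : Type) [Fintype A] (n : ℕ) : Set (PathExpr A) :=
  {α | α ∈ (NF A n).1}

/-- `N̂ₙ`: normal-form node expressions of level `n`. -/
noncomputable def Nnf (A : Type) [Fintype A] (n : ℕ) : Set (NodeExpr A) :=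
  {φ | φ ∈ (NF A n).2}

/-- `D̂ₙ`: data-aware diamonds between normal-form paths of level `n`. -/
noncomputable def Dnf (A : Type) [Fintype A] (n : ℕ) : Set (NodeExpr A) :=
  {φ | ∃ α ∈ Pnf A n, ∃ β ∈ Pnf A n, φ = NodeExpr.eqTest α β}

/-- The conjuncts of a node expression (flattening `∧`). -/
def conjuncts : NodeExpr A → List (NodeExpr A)
  | .conj φ ψ => conjuncts φ ++ conjuncts ψ
  | φ => [φ]

/-- `δ` is a conjunct of `ψ`. -/
def IsConjunct (δ ψ : NodeExpr A) : Prop := δ ∈ conjuncts ψ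

/-- Length of a path expression. -/
def plen : PathExpr A → ℕ
  | .eps => 0
  | .down => 1
  | .test _ => 0
  | .comp α β => plen α + plen β
  | .union α β => max (plen α) (plen β)

mutual
/-- Downward depth of a node expression. -/
def ndd : NodeExpr A → ℕ
  | .lab _ => 0
  | .neg φ => ndd φ
  | .conj φ ψ => max (ndd φ) (ndd ψ)
  | .diam α => pdd α
  | .eqTest α β => max (pdd α) (pdd β)

/-- Downward depth of a path expression. -/
def pdd : PathExpr A → ℕ
  | .eps => 0
  | .down => 1
  | .test φ => ndd φ
  | .comp α β => max (max (pdd α) (pdd β)) (plen α + pdd β)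
  | .union α β => max (pdd α) (pdd β)
end

/-- The path `↓[ψ]α`. -/
def dPath (ψ : NodeExpr A) (α : PathExpr A) : PathExpr A :=
  .comp .down (.comp (.test ψ) α)

/-- A path expression whose leftmost symbol is `↓`. -/
def startsWithDown : PathExpr A → Prop
  | .down => True
  | .comp α _ => startsWithDown α
  | _ => False

end XPathMinus
namespace XPathMinus
variable {A : Type} [Fintype A]

open NodeExpr PathExpr

instance : Trans (@NDer A _) NDer NDer := ⟨NDer.trans⟩
instance : Trans (@PDer A _) PDer PDer := ⟨PDer.trans⟩

theorem orCongr {φ φ' ψ ψ' : NodeExpr A} (h1 : NDer φ φ') (h2 : NDer ψ ψ') :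
    NDer (nOr φ ψ) (nOr φ' ψ') :=
  .congr_neg (.congr_conj (.congr_neg h1) (.congr_neg h2))

theorem or_as_diam (φ ψ : NodeExpr A) :
    NDer (nOr φ ψ) (.diam (.union (.test φ) (.test ψ))) :=
  (orCongr (NDer.ndAx2 φ).symm (NDer.ndAx2 ψ).symm).trans (NDer.ndAx3 _ _).symm

theorem or_comm' (φ ψ : NodeExpr A) : NDer (nOr φ ψ) (nOr ψ φ) :=
  ((or_as_diam φ ψ).trans (.congr_diam (.isAx2 _ _))).trans (or_as_diam ψ φ).symm

theorem or_idem (φ : NodeExpr A) : NDer (nOr φ φ) φ :=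
  ((or_as_diam φ φ).trans (.congr_diam (.isAx3 _))).trans (NDer.ndAx2 φ)

theorem or_bot_left (φ : NodeExpr A) : NDer (nOr botN φ) φ :=
  ((orCongr (NDer.ndAx2 botN).symm (NDer.ndAx2 φ).symm).trans
    ((NDer.ndAx3 (.test botN) (.test φ)).symm.trans (.congr_diam (.isAx7 _)))).trans (NDer.ndAx2 φ)

theorem or_bot_right (φ : NodeExpr A) : NDer (nOr φ botN) φ :=
  (or_comm' _ _).trans (or_bot_left φ)

theorem test_or (φ ψ : NodeExpr A) :
    PDer (PathExpr.test (nOr φ ψ)) (.union (.test φ) (.test ψ)) := .prAx3 φ ψ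

theorem or_assoc' (φ ψ ρ : NodeExpr A) :
    NDer (nOr (nOr φ ψ) ρ) (nOr φ (nOr ψ ρ)) := by
  have h1 : NDer (nOr (nOr φ ψ) ρ) (.diam (.union (.union (.test φ) (.test ψ)) (.test ρ))) :=
    (or_as_diam _ _).trans (.congr_diam (.congr_union (test_or φ ψ) (.refl _)))
  have h2 : NDer (nOr φ (nOr ψ ρ)) (.diam (.union (.test φ) (.union (.test ψ) (.test ρ)))) :=
    (or_as_diam _ _).trans (.congr_diam (.congr_union (.refl _) (test_or ψ ρ)))
  exact (h1.trans (.congr_diam (.isAx1 _ _ _))).trans h2.symm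

/-- `⊤ ≡ ¬ψ ∨ ¬¬ψ`. -/
theorem top_or_neg (ψ : NodeExpr A) : NDer topN (nOr (.neg ψ) (.neg (.neg ψ))) := by
  have h := NDer.ndAx1 (A := A) topN ψ
  exact h.trans (orCongr (.congr_neg (or_bot_left ψ)) (.congr_neg (or_bot_left (.neg ψ))))

/-- Double negation. -/
theorem dn (φ : NodeExpr A) : NDer (.neg (.neg φ)) φ := by
  have h := NDer.ndAx1 (A := A) φ (.neg φ)
  have h2 : NDer φ (nOr (.neg (.neg φ)) (.neg topN)) :=
    h.trans (orCongr (.congr_neg (or_idem (.neg φ))) (.congr_neg (top_or_neg φ).symm))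
  exact (h2.trans (or_bot_right _)).symm

theorem em (φ : NodeExpr A) : NDer (nOr φ (.neg φ)) topN :=
  (or_comm' _ _).trans ((top_or_neg φ).trans (orCongr (.refl _) (dn φ))).symm

/-- `φ ∧ ψ ≡ ¬(¬φ ∨ ¬ψ)`. -/
theorem and_dual (φ ψ : NodeExpr A) :
    NDer (.conj φ ψ) (.neg (nOr (.neg φ) (.neg ψ))) :=
  (NDer.congr_conj (dn φ).symm (dn ψ).symm).trans
    (dn (.conj (.neg (.neg φ)) (.neg (.neg ψ)))).symm

theorem andCongr {φ φ' ψ ψ' : NodeExpr A} (h1 : NDer φ φ') (h2 : NDer ψ ψ') :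
    NDer (.conj φ ψ) (.conj φ' ψ') := .congr_conj h1 h2

theorem and_comm' (φ ψ : NodeExpr A) : NDer (.conj φ ψ) (.conj ψ φ) :=
  ((and_dual φ ψ).trans (.congr_neg (or_comm' _ _))).trans (and_dual ψ φ).symm

theorem and_assoc' (φ ψ ρ : NodeExpr A) :
    NDer (.conj (.conj φ ψ) ρ) (.conj φ (.conj ψ ρ)) := by
  have h1 : NDer (NodeExpr.conj (.conj φ ψ) ρ) (.neg (nOr (nOr (.neg φ) (.neg ψ)) (.neg ρ))) :=
    ((andCongr (and_dual φ ψ) (.refl ρ)).trans (and_dual _ _)).trans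
      (.congr_neg (orCongr (dn _) (.refl _)))
  have h2 : NDer (NodeExpr.conj φ (.conj ψ ρ)) (.neg (nOr (.neg φ) (nOr (.neg ψ) (.neg ρ)))) :=
    ((andCongr (.refl φ) (and_dual ψ ρ)).trans (and_dual _ _)).trans
      (.congr_neg (orCongr (.refl _) (dn _)))
  exact (h1.trans (.congr_neg (or_assoc' _ _ _))).trans h2.symm

theorem and_idem (φ : NodeExpr A) : NDer (.conj φ φ) φ :=
  ((and_dual φ φ).trans (.congr_neg (or_idem _))).trans (dn φ)

theorem neg_top : NDer (.neg (topN : NodeExpr A)) botN := .refl _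

theorem neg_bot : NDer (.neg (botN : NodeExpr A)) topN := dn topN

theorem or_top_left (φ : NodeExpr A) : NDer (nOr topN φ) topN := by
  have h1 : NDer (nOr topN φ) (nOr (nOr φ (.neg φ)) φ) := orCongr (em φ).symm (.refl φ)
  have h2 : NDer (nOr (nOr φ (.neg φ)) φ) (nOr (nOr φ φ) (.neg φ)) :=
    ((or_assoc' _ _ _).trans (orCongr (.refl _) (or_comm' _ _))).trans (or_assoc' _ _ _).symm
  exact ((h1.trans h2).trans (orCongr (or_idem φ) (.refl _))).trans (em φ)

theorem or_top_right (φ : NodeExpr A) : NDer (nOr φ topN) topN :=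
  (or_comm' _ _).trans (or_top_left φ)

theorem and_top_right (φ : NodeExpr A) : NDer (.conj φ topN) φ :=
  (((and_dual φ topN).trans (.congr_neg (orCongr (.refl _) neg_top))).trans
    (.congr_neg (or_bot_right _))).trans (dn φ)

theorem and_top_left (φ : NodeExpr A) : NDer (.conj topN φ) φ :=
  (and_comm' _ _).trans (and_top_right φ)

theorem and_bot_left (φ : NodeExpr A) : NDer (.conj botN φ) botN := by
  have h : NDer (NodeExpr.conj botN φ) (.neg (nOr topN (.neg φ))) :=
    (and_dual botN φ).trans (.congr_neg (orCongr neg_bot (.refl _)))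
  exact h.trans (.congr_neg (or_top_left _))

theorem and_bot_right (φ : NodeExpr A) : NDer (.conj φ botN) botN :=
  (and_comm' _ _).trans (and_bot_left φ)

theorem neg_or (φ ψ : NodeExpr A) : NDer (.neg (nOr φ ψ)) (.conj (.neg φ) (.neg ψ)) :=
  dn _

theorem neg_and (φ ψ : NodeExpr A) : NDer (.neg (.conj φ ψ)) (nOr (.neg φ) (.neg ψ)) :=
  NDer.congr_neg (andCongr (dn φ).symm (dn ψ).symm)

theorem and_contra (φ : NodeExpr A) : NDer (.conj φ (.neg φ)) botN :=
  ((and_dual _ _).trans (.congr_neg (orCongr (.refl _) (dn _)))).trans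
    (.congr_neg ((or_comm' _ _).trans (em φ)))

end XPathMinus
namespace XPathMinus
variable {A : Type} [Fintype A]

open NodeExpr PathExpr

/-- Provable order on node expressions. -/
def nle (φ ψ : NodeExpr A) : Prop := NDer (nOr φ ψ) ψ

/-- Provable order on path expressions. -/
def ple (α β : PathExpr A) : Prop := PDer (.union α β) β

theorem nle_of_der {φ ψ : NodeExpr A} (h : NDer φ ψ) : nle φ ψ :=
  (orCongr h (.refl _)).trans (or_idem ψ)

theorem nle_refl (φ : NodeExpr A) : nle φ φ := or_idem φ

theorem nle_congr {φ φ' ψ ψ' : NodeExpr A} (h1 : NDer φ φ') (h2 : NDer ψ ψ')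
    (h : nle φ ψ) : nle φ' ψ' := ((orCongr h1.symm h2.symm).trans h).trans h2

theorem nle_trans {a b c : NodeExpr A} (h1 : nle a b) (h2 : nle b c) : nle a c := by
  have : NDer (nOr a c) (nOr a (nOr b c)) := orCongr (.refl a) h2.symm
  have : NDer (nOr a c) (nOr (nOr a b) c) := this.trans (or_assoc' _ _ _).symm
  exact (this.trans (orCongr h1 (.refl c))).trans h2

theorem bot_nle (φ : NodeExpr A) : nle botN φ := or_bot_left φ

theorem nle_top (φ : NodeExpr A) : nle φ topN := or_top_right φ

theorem nle_antisymm {φ ψ : NodeExpr A} (h1 : nle φ ψ) (h2 : nle ψ φ) : NDer φ ψ :=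
  (h2.symm.trans (or_comm' _ _)).trans h1

theorem nle_or_left (a b : NodeExpr A) : nle a (nOr a b) :=
  (or_assoc' a a b).symm.trans (orCongr (or_idem a) (.refl b))

theorem nle_or_right (a b : NodeExpr A) : nle b (nOr a b) :=
  nle_congr (NDer.refl b) (or_comm' b a) (nle_or_left b a)

theorem or_nle {a b c : NodeExpr A} (h1 : nle a c) (h2 : nle b c) : nle (nOr a b) c :=
  ((or_assoc' a b c).trans (orCongr (.refl a) h2)).trans h1

theorem nle_bot_eq {φ : NodeExpr A} (h : nle φ botN) : NDer φ botN :=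
  nle_antisymm h (bot_nle φ)

theorem node_eq_self (ψ : NodeExpr A) : NDer (.eqTest (.test ψ) (.test ψ)) ψ :=
  (NDer.eqAx6 _).trans (NDer.ndAx2 ψ)

theorem and_as_eq (φ ψ : NodeExpr A) :
    NDer (.conj φ ψ) (.eqTest (.comp (.test φ) (.test ψ)) (.test ψ)) :=
  (andCongr (.refl φ) (node_eq_self ψ).symm).trans (NDer.eqAx3 φ (.test ψ) (.test ψ))

theorem and_self_left (φ ψ : NodeExpr A) :
    NDer (.conj φ (.conj φ ψ)) (.conj φ ψ) :=
  (and_assoc' φ φ ψ).symm.trans (andCongr (and_idem φ) (.refl ψ))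

theorem diam_pair (φ ψ : NodeExpr A) :
    NDer (.diam (.comp (.test φ) (.test ψ))) (.conj φ ψ) := by
  have h1 : NDer (NodeExpr.diam (.comp (.test φ) (.test ψ)))
      (.eqTest (.comp (.test φ) (.test ψ)) (.comp (.test φ) (.test ψ))) :=
    (NDer.eqAx6 _).symm
  have h2 : NDer (NodeExpr.conj φ (.eqTest (.test ψ) (.comp (.test φ) (.test ψ))))
      (.eqTest (.comp (.test φ) (.test ψ)) (.comp (.test φ) (.test ψ))) :=
    NDer.eqAx3 φ (.test ψ) (.comp (.test φ) (.test ψ))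
  have h3 : NDer (NodeExpr.eqTest (.test ψ) (.comp (.test φ) (.test ψ))) (.conj φ ψ) :=
    (NDer.eqAx1 _ _).trans (and_as_eq φ ψ).symm
  exact ((h1.trans h2.symm).trans (andCongr (.refl φ) h3)).trans (and_self_left φ ψ)

theorem nle_eq_diam (α β : PathExpr A) : nle (.eqTest α β) (.diam α) := NDer.eqAx4 α β

/-- Distributivity. -/
theorem distrib_l (φ ψ ρ : NodeExpr A) :
    NDer (.conj φ (nOr ψ ρ)) (nOr (.conj φ ψ) (.conj φ ρ)) := by
  have stepA : NDer (NodeExpr.conj φ (nOr ψ ρ))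
      (.eqTest (.comp (.test φ) (.union (.test ψ) (.test ρ))) (.union (.test ψ) (.test ρ))) :=
    (and_as_eq φ (nOr ψ ρ)).trans
      (.congr_eqTest (.congr_comp (.refl _) (test_or ψ ρ)) (test_or ψ ρ))
  have stepB : NDer (NodeExpr.conj φ (nOr ψ ρ))
      (.eqTest (.union (.comp (.test φ) (.test ψ)) (.comp (.test φ) (.test ρ)))
        (.union (.test ψ) (.test ρ))) :=
    stepA.trans (.congr_eqTest (.isAx6l _ _ _) (.refl _))
  have stepC : NDer (NodeExpr.conj φ (nOr ψ ρ))
      (nOr (.eqTest (.comp (.test φ) (.test ψ)) (.union (.test ψ) (.test ρ)))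
           (.eqTest (.comp (.test φ) (.test ρ)) (.union (.test ψ) (.test ρ)))) :=
    stepB.trans (NDer.eqAx2 _ _ _)
  -- first disjunct ≡ φ ∧ ψ
  have d1 : NDer (NodeExpr.eqTest (.comp (.test φ) (.test ψ)) (.union (.test ψ) (.test ρ)))
      (.conj φ ψ) := by
    have e1 : NDer (NodeExpr.eqTest (.comp (.test φ) (.test ψ)) (.union (.test ψ) (.test ρ)))
        (nOr (.eqTest (.test ψ) (.comp (.test φ) (.test ψ)))
             (.eqTest (.test ρ) (.comp (.test φ) (.test ψ)))) :=
      (NDer.eqAx1 _ _).trans (NDer.eqAx2 _ _ _)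
    have keep : NDer (NodeExpr.eqTest (.test ψ) (.comp (.test φ) (.test ψ))) (.conj φ ψ) :=
      (NDer.eqAx1 _ _).trans (and_as_eq φ ψ).symm
    have cross : nle (NodeExpr.eqTest (.test ρ) (.comp (.test φ) (.test ψ))) (.conj φ ψ) := by
      have c1 : nle (NodeExpr.eqTest (.comp (.test φ) (.test ψ)) (.test ρ))
          (.diam (.comp (.test φ) (.test ψ))) := nle_eq_diam _ _
      exact nle_congr (NDer.eqAx1 _ _) (diam_pair φ ψ) c1
    exact e1.trans (nle_antisymm (or_nle (nle_of_der keep) cross)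
      (nle_trans (nle_of_der keep.symm) (nle_or_left _ _)))
  have d2 : NDer (NodeExpr.eqTest (.comp (.test φ) (.test ρ)) (.union (.test ψ) (.test ρ)))
      (.conj φ ρ) := by
    have e1 : NDer (NodeExpr.eqTest (.comp (.test φ) (.test ρ)) (.union (.test ψ) (.test ρ)))
        (nOr (.eqTest (.test ψ) (.comp (.test φ) (.test ρ)))
             (.eqTest (.test ρ) (.comp (.test φ) (.test ρ)))) :=
      (NDer.eqAx1 _ _).trans (NDer.eqAx2 _ _ _)
    have keep : NDer (NodeExpr.eqTest (.test ρ) (.comp (.test φ) (.test ρ))) (.conj φ ρ) :=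
      (NDer.eqAx1 _ _).trans (and_as_eq φ ρ).symm
    have cross : nle (NodeExpr.eqTest (.test ψ) (.comp (.test φ) (.test ρ))) (.conj φ ρ) :=
      nle_congr (NDer.eqAx1 _ _) (diam_pair φ ρ) (nle_eq_diam _ _)
    exact e1.trans (nle_antisymm
      (or_nle cross (nle_of_der keep))
      (nle_trans (nle_of_der keep.symm) (nle_or_right _ _)))
  exact stepC.trans (orCongr d1 d2)

theorem distrib_r (φ ψ ρ : NodeExpr A) :
    NDer (.conj (nOr ψ ρ) φ) (nOr (.conj ψ φ) (.conj ρ φ)) :=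
  ((and_comm' _ _).trans (distrib_l φ ψ ρ)).trans (orCongr (and_comm' _ _) (and_comm' _ _))

theorem absorb1 (φ ψ : NodeExpr A) : NDer (nOr φ (.conj φ ψ)) φ := by
  have h : NDer (nOr φ (.conj φ ψ)) (.conj φ (nOr topN ψ)) :=
    (orCongr (and_top_right φ).symm (.refl _)).trans (distrib_l φ topN ψ).symm
  exact (h.trans (andCongr (.refl φ) (or_top_left ψ))).trans (and_top_right φ)

theorem absorb2 (φ ψ : NodeExpr A) : NDer (.conj φ (nOr φ ψ)) φ :=
  ((distrib_l φ φ ψ).trans (orCongr (and_idem φ) (.refl _))).trans (absorb1 φ ψ)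

theorem nle_and_left (φ ψ : NodeExpr A) : nle (.conj φ ψ) φ :=
  (or_comm' _ _).trans (absorb1 φ ψ)

theorem nle_and_right (φ ψ : NodeExpr A) : nle (.conj φ ψ) ψ :=
  nle_congr (and_comm' ψ φ) (.refl ψ) (nle_and_left ψ φ)

theorem and_of_nle {φ ψ : NodeExpr A} (h : nle φ ψ) : NDer φ (.conj φ ψ) :=
  (absorb2 φ ψ).symm.trans (andCongr (.refl φ) h)

theorem nle_of_and {φ ψ : NodeExpr A} (h : NDer φ (.conj φ ψ)) : nle φ ψ := by
  have : NDer (nOr φ ψ) (nOr ψ (.conj ψ φ)) :=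
    (orCongr (h.trans (and_comm' _ _)) (.refl ψ)).trans (or_comm' _ _)
  exact this.trans (absorb1 ψ φ)

theorem nle_and_intro {c a b : NodeExpr A} (h1 : nle c a) (h2 : nle c b) :
    nle c (.conj a b) := by
  exact nle_of_and (((and_of_nle h2).trans (andCongr (and_of_nle h1) (.refl b))).trans
    (and_assoc' c a b))

theorem neg_antitone {a b : NodeExpr A} (h : nle a b) : nle (.neg b) (.neg a) := by
  apply nle_of_and
  have h1 : NDer (NodeExpr.neg b) (.conj (.neg a) (.neg b)) :=
    (NDer.congr_neg h.symm).trans (neg_or a b)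
  exact h1.trans (and_comm' _ _)

theorem and_mono {a a' b b' : NodeExpr A} (h1 : nle a a') (h2 : nle b b') :
    nle (.conj a b) (.conj a' b') :=
  nle_and_intro (nle_trans (nle_and_left a b) h1) (nle_trans (nle_and_right a b) h2)

/-- If `t ∧ φ ≡ t` then `t ∧ ¬φ ≡ ⊥`. -/
theorem and_neg_bot {t φ : NodeExpr A} (h : NDer (.conj t φ) t) :
    NDer (.conj t (.neg φ)) botN := by
  have h1 : NDer (NodeExpr.conj t (.neg φ)) (.conj (.conj t φ) (.neg φ)) :=
    andCongr h.symm (.refl _)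
  have h2 : NDer (NodeExpr.conj (.conj t φ) (.neg φ)) (.conj t (.conj φ (.neg φ))) :=
    and_assoc' _ _ _
  exact ((h1.trans h2).trans (andCongr (.refl t) (and_contra φ))).trans (and_bot_right t)

/-- If `t ∧ φ ≡ ⊥` then `t ∧ ¬φ ≡ t`. -/
theorem and_neg_of_bot {t φ : NodeExpr A} (h : NDer (.conj t φ) botN) :
    NDer (.conj t (.neg φ)) t := by
  have h1 : NDer t (.conj t (nOr φ (.neg φ))) :=
    (and_top_right t).symm.trans (andCongr (.refl t) (em φ).symm)
  have h2 : NDer t (nOr (.conj t φ) (.conj t (.neg φ))) := h1.trans (distrib_l _ _ _)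
  have h3 : NDer t (.conj t (.neg φ)) :=
    (h2.trans (orCongr h (.refl _))).trans (or_bot_left _)
  exact h3.symm

end XPathMinus
namespace XPathMinus
variable {A : Type} [Fintype A]

open NodeExpr PathExpr

theorem ple_of_der {α β : PathExpr A} (h : PDer α β) : ple α β :=
  (PDer.congr_union h (.refl _)).trans (.isAx3 β)

theorem ple_refl (α : PathExpr A) : ple α α := .isAx3 α

theorem ple_congr {α α' β β' : PathExpr A} (h1 : PDer α α') (h2 : PDer β β')
    (h : ple α β) : ple α' β' := ((PDer.congr_union h1.symm h2.symm).trans h).trans h2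

theorem ple_trans {a b c : PathExpr A} (h1 : ple a b) (h2 : ple b c) : ple a c := by
  have s1 : PDer (PathExpr.union a c) (.union a (.union b c)) := .congr_union (.refl a) h2.symm
  have s2 : PDer (PathExpr.union a c) (.union (.union a b) c) := s1.trans (PDer.isAx1 a b c).symm
  exact (s2.trans (.congr_union h1 (.refl c))).trans h2

theorem pbot_le (α : PathExpr A) : ple botP α := .isAx7 α

theorem ple_antisymm {α β : PathExpr A} (h1 : ple α β) (h2 : ple β α) : PDer α β :=
  (h2.symm.trans (.isAx2 _ _)).trans h1

theorem ple_bot_eq {α : PathExpr A} (h : ple α botP) : PDer α botP :=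
  ple_antisymm h (pbot_le α)

theorem ple_union_left (a b : PathExpr A) : ple a (.union a b) :=
  (PDer.isAx1 a a b).symm.trans (.congr_union (.isAx3 a) (.refl b))

theorem ple_union_right (a b : PathExpr A) : ple b (.union a b) :=
  ple_congr (.refl b) (.isAx2 b a) (ple_union_left b a)

theorem union_ple {a b c : PathExpr A} (h1 : ple a c) (h2 : ple b c) :
    ple (.union a b) c :=
  ((PDer.isAx1 a b c).trans (.congr_union (.refl a) h2)).trans h1

theorem test_le {φ ψ : NodeExpr A} (h : nle φ ψ) : ple (.test φ) (.test ψ) :=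
  (PDer.prAx3 φ ψ).symm.trans (.congr_test h)

theorem comp_mono_l {α α' : PathExpr A} (γ : PathExpr A) (h : ple α α') :
    ple (.comp α γ) (.comp α' γ) :=
  (PDer.isAx6r α α' γ).symm.trans (.congr_comp h (.refl γ))

theorem comp_mono_r {α α' : PathExpr A} (γ : PathExpr A) (h : ple α α') :
    ple (.comp γ α) (.comp γ α') :=
  (PDer.isAx6l γ α α').symm.trans (.congr_comp (.refl γ) h)

theorem test_comp_bot (ψ : NodeExpr A) :
    PDer (.comp (.test (.neg ψ)) (.test ψ)) botP := by
  have h0 : NDer (NodeExpr.neg ψ) (.neg (.diam (.test ψ))) := .congr_neg (NDer.ndAx2 ψ).symm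
  have h1 : PDer (PathExpr.comp (.test (.neg ψ)) (.test ψ))
      (.comp (.comp .eps (.test (.neg (.diam (.test ψ))))) (.test ψ)) :=
    .congr_comp ((PDer.congr_test h0).trans (PDer.isAx5l _).symm) (.refl _)
  exact h1.trans (.prAx1 .eps (.test ψ))

theorem test_comp_bot' (ψ : NodeExpr A) :
    PDer (.comp (.test ψ) (.test (.neg ψ))) botP := by
  have h0 : NDer ψ (.neg (.diam (.test (.neg ψ)))) :=
    ((dn ψ).symm.trans (.congr_neg (NDer.ndAx2 (.neg ψ)).symm))
  have h1 : PDer (PathExpr.comp (.test ψ) (.test (.neg ψ)))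
      (.comp (.comp .eps (.test (.neg (.diam (.test (.neg ψ)))))) (.test (.neg ψ))) :=
    .congr_comp ((PDer.congr_test h0).trans (PDer.isAx5l _).symm) (.refl _)
  exact h1.trans (.prAx1 .eps (.test (.neg ψ)))

theorem comp_bot_r (α : PathExpr A) : PDer (.comp α botP) botP :=
  (PDer.isAx5r _).symm.trans (.prAx1 α .eps)

theorem comp_bot_l (α : PathExpr A) : PDer (.comp botP α) botP := by
  have h1 : ple (PathExpr.comp botP α) (.comp (.test (.neg (.diam α))) α) :=
    comp_mono_l α (test_le (bot_nle (.neg (.diam α))))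
  have h2 : PDer (PathExpr.comp (.test (.neg (.diam α))) α) botP :=
    (PDer.congr_comp (PDer.isAx5l _).symm (.refl α)).trans (.prAx1 .eps α)
  exact ple_bot_eq (ple_congr (.refl _) h2 h1)

theorem and_split (φ ψ : NodeExpr A) :
    NDer φ (nOr (.conj φ ψ) (.conj φ (.neg ψ))) :=
  (((and_top_right φ).symm.trans (andCongr (.refl φ) (em ψ).symm)).trans (distrib_l _ _ _))

theorem eps_test_split (ψ : NodeExpr A) :
    PDer (.eps : PathExpr A) (.union (.test ψ) (.test (.neg ψ))) :=
  PDer.prAx2.symm.trans ((PDer.congr_test (em ψ).symm).trans (test_or ψ (.neg ψ)))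

theorem test_absorb {θ ψ : NodeExpr A} (h : nle θ ψ) :
    PDer (.comp (.test θ) (.test ψ)) (.test θ) := by
  have e1 : PDer (PathExpr.test θ) (.comp (.test θ) (.union (.test ψ) (.test (.neg ψ)))) :=
    (PDer.isAx5r _).symm.trans (.congr_comp (.refl _) (eps_test_split ψ))
  have e2 : PDer (PathExpr.test θ)
      (.union (.comp (.test θ) (.test ψ)) (.comp (.test θ) (.test (.neg ψ)))) :=
    e1.trans (.isAx6l _ _ _)
  have hdrop : PDer (PathExpr.comp (.test θ) (.test (.neg ψ))) botP :=
    ple_bot_eq (ple_trans (comp_mono_l _ (test_le h)) (ple_of_der (test_comp_bot' ψ)))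
  have e3 : PDer (PathExpr.test θ) (.comp (.test θ) (.test ψ)) :=
    ((e2.trans (.congr_union (.refl _) hdrop)).trans (.isAx2 _ _)).trans (.isAx7 _)
  exact e3.symm

theorem test_merge (φ ψ : NodeExpr A) :
    PDer (.comp (.test φ) (.test ψ)) (.test (.conj φ ψ)) := by
  have e1 : PDer (PathExpr.test φ)
      (.union (.test (.conj φ ψ)) (.test (.conj φ (.neg ψ)))) :=
    (PDer.congr_test (and_split φ ψ)).trans (test_or _ _)
  have e2 : PDer (PathExpr.comp (.test φ) (.test ψ))
      (.union (.comp (.test (.conj φ ψ)) (.test ψ)) (.comp (.test (.conj φ (.neg ψ))) (.test ψ))) :=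
    (PDer.congr_comp e1 (.refl _)).trans (.isAx6r _ _ _)
  have hdrop : PDer (PathExpr.comp (.test (.conj φ (.neg ψ))) (.test ψ)) botP :=
    ple_bot_eq (ple_trans (comp_mono_l _ (test_le (nle_and_right φ (.neg ψ))))
      (ple_of_der (test_comp_bot ψ)))
  have e3 : PDer (PathExpr.comp (.test φ) (.test ψ)) (.comp (.test (.conj φ ψ)) (.test ψ)) :=
    ((e2.trans (.congr_union (.refl _) hdrop)).trans (.isAx2 _ _)).trans (.isAx7 _)
  exact e3.trans (test_absorb (nle_and_right φ ψ))

theorem diam_test_comp (φ : NodeExpr A) (α : PathExpr A) :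
    NDer (.diam (.comp (.test φ) α)) (.conj φ (.diam α)) :=
  (NDer.ndAx4 (.test φ) α).trans (diam_pair φ (.diam α))

theorem diam_bot : NDer (NodeExpr.diam (botP : PathExpr A)) botN := NDer.ndAx2 botN

theorem eq_bot_l (β : PathExpr A) : NDer (.eqTest botP β) botN :=
  nle_bot_eq (nle_trans (nle_eq_diam botP β) (nle_of_der diam_bot))

theorem eq_bot_r (β : PathExpr A) : NDer (.eqTest β botP) botN :=
  (NDer.eqAx1 _ _).trans (eq_bot_l β)

end XPathMinus
set_option linter.unusedSectionVars false
namespace XPathMinus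
variable {A : Type} {B : Type*} [Fintype A]

open NodeExpr PathExpr

@[simp] theorem bigOr_nil : bigOr ([] : List (NodeExpr A)) = botN := rfl
@[simp] theorem bigOr_cons (a : NodeExpr A) (l : List (NodeExpr A)) :
    bigOr (a :: l) = nOr a (bigOr l) := rfl
@[simp] theorem bigUnion_nil : bigUnion ([] : List (PathExpr A)) = botP := rfl
@[simp] theorem bigUnion_cons (a : PathExpr A) (l : List (PathExpr A)) :
    bigUnion (a :: l) = PathExpr.union a (bigUnion l) := rfl

theorem bigOr_append (l1 l2 : List (NodeExpr A)) :
    NDer (bigOr (l1 ++ l2)) (nOr (bigOr l1) (bigOr l2)) := by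
  induction l1 with
  | nil => exact (or_bot_left _).symm
  | cons a l ih =>
    simpa using (orCongr (.refl a) ih).trans (or_assoc' a (bigOr l) (bigOr l2)).symm

theorem bigUnion_append (l1 l2 : List (PathExpr A)) :
    PDer (bigUnion (l1 ++ l2)) (.union (bigUnion l1) (bigUnion l2)) := by
  induction l1 with
  | nil => exact (PDer.isAx7 _).symm
  | cons a l ih =>
    simpa using (PDer.congr_union (.refl a) ih).trans (PDer.isAx1 a (bigUnion l) (bigUnion l2)).symm

theorem nle_bigOr {φ : NodeExpr A} {l : List (NodeExpr A)} (h : φ ∈ l) :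
    nle φ (bigOr l) := by
  induction l with
  | nil => cases h
  | cons a l ih =>
    rcases List.mem_cons.1 h with rfl | h
    · exact nle_or_left _ _
    · exact nle_trans (ih h) (nle_or_right _ _)

theorem bigOr_nle {l : List (NodeExpr A)} {ψ : NodeExpr A} (h : ∀ φ ∈ l, nle φ ψ) :
    nle (bigOr l) ψ := by
  induction l with
  | nil => exact bot_nle ψ
  | cons a l ih =>
    exact or_nle (h a (by simp)) (ih fun φ hφ => h φ (by simp [hφ]))

theorem ple_bigUnion {α : PathExpr A} {l : List (PathExpr A)} (h : α ∈ l) :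
    ple α (bigUnion l) := by
  induction l with
  | nil => cases h
  | cons a l ih =>
    rcases List.mem_cons.1 h with rfl | h
    · exact ple_union_left _ _
    · exact ple_trans (ih h) (ple_union_right _ _)

theorem bigUnion_ple {l : List (PathExpr A)} {β : PathExpr A} (h : ∀ α ∈ l, ple α β) :
    ple (bigUnion l) β := by
  induction l with
  | nil => exact pbot_le β
  | cons a l ih =>
    exact union_ple (h a (by simp)) (ih fun α hα => h α (by simp [hα]))

theorem bigOr_map_congr {L : List B} {f g : B → NodeExpr A}
    (h : ∀ x ∈ L, NDer (f x) (g x)) :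
    NDer (bigOr (L.map f)) (bigOr (L.map g)) := by
  induction L with
  | nil => exact .refl _
  | cons a L ih =>
    exact orCongr (h a (by simp)) (ih fun x hx => h x (by simp [hx]))

theorem bigUnion_map_congr {L : List B} {f g : B → PathExpr A}
    (h : ∀ x ∈ L, PDer (f x) (g x)) :
    PDer (bigUnion (L.map f)) (bigUnion (L.map g)) := by
  induction L with
  | nil => exact .refl _
  | cons a L ih =>
    exact .congr_union (h a (by simp)) (ih fun x hx => h x (by simp [hx]))

theorem bigOr_flatMap (L : List B) (f : B → List (NodeExpr A)) :
    NDer (bigOr (L.flatMap f)) (bigOr (L.map fun x => bigOr (f x))) := by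
  induction L with
  | nil => exact .refl _
  | cons a L ih =>
    have : NDer (bigOr (f a ++ L.flatMap f)) (nOr (bigOr (f a)) (bigOr (L.flatMap f))) :=
      bigOr_append _ _
    simpa [List.flatMap_cons] using this.trans (orCongr (.refl _) ih)

theorem bigUnion_flatMap (L : List B) (f : B → List (PathExpr A)) :
    PDer (bigUnion (L.flatMap f)) (bigUnion (L.map fun x => bigUnion (f x))) := by
  induction L with
  | nil => exact .refl _
  | cons a L ih =>
    have : PDer (bigUnion (f a ++ L.flatMap f)) (.union (bigUnion (f a)) (bigUnion (L.flatMap f))) :=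
      bigUnion_append _ _
    simpa [List.flatMap_cons] using this.trans (.congr_union (.refl _) ih)

theorem and_bigOr (φ : NodeExpr A) (l : List (NodeExpr A)) :
    NDer (.conj φ (bigOr l)) (bigOr (l.map (fun ψ => .conj φ ψ))) := by
  induction l with
  | nil => exact and_bot_right φ
  | cons a l ih =>
    exact (distrib_l φ a (bigOr l)).trans (orCongr (.refl _) ih)

theorem comp_bigUnion_l (l : List (PathExpr A)) (γ : PathExpr A) :
    PDer (.comp (bigUnion l) γ) (bigUnion (l.map (fun α => .comp α γ))) := by
  induction l with
  | nil => exact comp_bot_l γ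
  | cons a l ih =>
    exact (PDer.isAx6r a (bigUnion l) γ).trans (.congr_union (.refl _) ih)

theorem comp_bigUnion_r (l : List (PathExpr A)) (γ : PathExpr A) :
    PDer (.comp γ (bigUnion l)) (bigUnion (l.map (fun α => .comp γ α))) := by
  induction l with
  | nil => exact comp_bot_r γ
  | cons a l ih =>
    exact (PDer.isAx6l γ a (bigUnion l)).trans (.congr_union (.refl _) ih)

theorem test_bigOr (l : List (NodeExpr A)) :
    PDer (.test (bigOr l)) (bigUnion (l.map .test)) := by
  induction l with
  | nil => exact .refl _
  | cons a l ih =>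
    exact (PDer.prAx3 a (bigOr l)).trans (.congr_union (.refl _) ih)

theorem diam_bigUnion (l : List (PathExpr A)) :
    NDer (.diam (bigUnion l)) (bigOr (l.map .diam)) := by
  induction l with
  | nil => exact diam_bot
  | cons a l ih =>
    exact (NDer.ndAx3 a (bigUnion l)).trans (orCongr (.refl _) ih)

theorem eq_bigUnion_l (l : List (PathExpr A)) (β : PathExpr A) :
    NDer (.eqTest (bigUnion l) β) (bigOr (l.map (fun α => .eqTest α β))) := by
  induction l with
  | nil => exact eq_bot_l β
  | cons a l ih =>
    exact (NDer.eqAx2 a (bigUnion l) β).trans (orCongr (.refl _) ih)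

/-- Reduce a disjunction by rewriting kept entries and dropping bottom entries. -/
theorem bigOr_reduce {L : List B} {f g : B → NodeExpr A} {p : B → Bool}
    (h1 : ∀ x ∈ L, p x = true → NDer (f x) (g x))
    (h2 : ∀ x ∈ L, p x = false → NDer (f x) botN) :
    NDer (bigOr (L.map f)) (bigOr ((L.filter p).map g)) := by
  induction L with
  | nil => exact .refl _
  | cons a L ih =>
    have ih' := ih (fun x hx => h1 x (by simp [hx])) (fun x hx => h2 x (by simp [hx]))
    by_cases hp : p a = true
    · rw [List.filter_cons_of_pos hp]
      exact orCongr (h1 a (by simp) hp) ih'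
    · rw [List.filter_cons_of_neg (by simpa using hp)]
      have hb := h2 a (by simp) (by simpa using hp)
      exact (orCongr hb ih').trans (or_bot_left _)

theorem bigUnion_reduce {L : List B} {f g : B → PathExpr A} {p : B → Bool}
    (h1 : ∀ x ∈ L, p x = true → PDer (f x) (g x))
    (h2 : ∀ x ∈ L, p x = false → PDer (f x) botP) :
    PDer (bigUnion (L.map f)) (bigUnion ((L.filter p).map g)) := by
  induction L with
  | nil => exact .refl _
  | cons a L ih =>
    have ih' := ih (fun x hx => h1 x (by simp [hx])) (fun x hx => h2 x (by simp [hx]))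
    by_cases hp : p a = true
    · rw [List.filter_cons_of_pos hp]
      exact .congr_union (h1 a (by simp) hp) ih'
    · rw [List.filter_cons_of_neg (by simpa using hp)]
      have hb := h2 a (by simp) (by simpa using hp)
      exact (PDer.congr_union hb ih').trans (.isAx7 _)

end XPathMinus
set_option linter.unusedSectionVars false
namespace XPathMinus
variable {A : Type} {B : Type*} [Fintype A]

open NodeExpr PathExpr List

theorem or_perm4 (a b c d : NodeExpr A) :
    NDer (nOr (nOr a b) (nOr c d)) (nOr (nOr a c) (nOr b d)) := by
  have s1 : NDer (nOr (nOr a b) (nOr c d)) (nOr a (nOr b (nOr c d))) := or_assoc' _ _ _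
  have s2 : NDer (nOr b (nOr c d)) (nOr c (nOr b d)) :=
    ((or_assoc' b c d).symm.trans (orCongr (or_comm' b c) (.refl d))).trans (or_assoc' c b d)
  exact (s1.trans (orCongr (.refl a) s2)).trans (or_assoc' a c (nOr b d)).symm

theorem bigOr_pair_split (L : List B) (u v : B → NodeExpr A) :
    NDer (bigOr (L.map fun s => nOr (u s) (v s)))
      (nOr (bigOr (L.map u)) (bigOr (L.map v))) := by
  induction L with
  | nil => exact (or_bot_left botN).symm
  | cons a L ih =>
    exact (orCongr (.refl _) ih).trans (or_perm4 (u a) (v a) _ _)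

theorem bigOr_subset {l1 l2 : List (NodeExpr A)} (h : ∀ φ ∈ l1, φ ∈ l2) :
    nle (bigOr l1) (bigOr l2) :=
  bigOr_nle fun φ hφ => nle_bigOr (h φ hφ)

theorem bigOr_equiv {l1 l2 : List (NodeExpr A)} (h1 : ∀ φ ∈ l1, φ ∈ l2)
    (h2 : ∀ φ ∈ l2, φ ∈ l1) : NDer (bigOr l1) (bigOr l2) :=
  nle_antisymm (bigOr_subset h1) (bigOr_subset h2)

theorem foldl_conj_nle_acc (h : B → NodeExpr A) :
    ∀ (D : List B) (acc : NodeExpr A),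
      nle (D.foldl (fun acc d => .conj acc (h d)) acc) acc
  | [], acc => nle_refl acc
  | d :: D, acc =>
    nle_trans (foldl_conj_nle_acc h D (.conj acc (h d))) (nle_and_left acc (h d))

theorem foldl_conj_nle_mem (h : B → NodeExpr A) {d : B} :
    ∀ (D : List B) (acc : NodeExpr A), d ∈ D →
      nle (D.foldl (fun acc d => .conj acc (h d)) acc) (h d) := by
  intro D
  induction D with
  | nil => intro acc hd; cases hd
  | cons e D ih =>
    intro acc hd
    rcases List.mem_cons.1 hd with rfl | hd
    · exact nle_trans (foldl_conj_nle_acc h D _) (nle_and_right acc (h d))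
    · exact ih _ hd

/-- `t` decides `φ`. -/
def NDec (t φ : NodeExpr A) : Prop :=
  NDer (.conj t φ) t ∨ NDer (.conj t φ) botN

theorem ndec_congr {t a b : NodeExpr A} (h : NDer a b) (hd : NDec t a) : NDec t b := by
  rcases hd with hd | hd
  · exact Or.inl ((andCongr (.refl t) h.symm).trans hd)
  · exact Or.inr ((andCongr (.refl t) h.symm).trans hd)

theorem ndec_of_nle {t a : NodeExpr A} (h : nle t a) : NDec t a :=
  Or.inl (and_of_nle h).symm

theorem ndec_top (t : NodeExpr A) : NDec t topN := Or.inl (and_top_right t)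

theorem ndec_bot (t : NodeExpr A) : NDec t botN := Or.inr (and_bot_right t)

theorem ndec_neg {t a : NodeExpr A} (h : NDec t a) : NDec t (.neg a) := by
  rcases h with h | h
  · exact Or.inr (and_neg_bot h)
  · exact Or.inl (and_neg_of_bot h)

theorem ndec_conj {t a b : NodeExpr A} (ha : NDec t a) (hb : NDec t b) :
    NDec t (.conj a b) := by
  rcases ha with ha | ha
  · rcases hb with hb | hb
    · exact Or.inl (((and_assoc' t a b).symm.trans (andCongr ha (.refl b))).trans hb)
    · exact Or.inr (((and_assoc' t a b).symm.trans (andCongr ha (.refl b))).trans hb)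
  · refine Or.inr ?_
    have h1 : nle (NodeExpr.conj t (.conj a b)) (.conj t a) :=
      and_mono (nle_refl t) (nle_and_left a b)
    exact nle_bot_eq (nle_trans h1 (nle_of_der ha))

theorem ndec_or {t a b : NodeExpr A} (ha : NDec t a) (hb : NDec t b) :
    NDec t (nOr a b) := by
  have base : NDer (.conj t (nOr a b)) (nOr (.conj t a) (.conj t b)) := distrib_l t a b
  rcases ha with ha | ha
  · exact Or.inl ((base.trans (orCongr ha (.refl _))).trans (absorb1 t b))
  · rcases hb with hb | hb
    · refine Or.inl ?_
      have : NDer (nOr (.conj t a) (.conj t b)) (nOr (.conj t b) (.conj t a)) := or_comm' _ _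
      exact ((base.trans this).trans (orCongr hb (.refl _))).trans (absorb1 t a)
    · exact Or.inr ((base.trans (orCongr ha hb)).trans (or_idem botN))

theorem ndec_bigOr {t : NodeExpr A} {l : List (NodeExpr A)}
    (h : ∀ φ ∈ l, NDec t φ) : NDec t (bigOr l) := by
  induction l with
  | nil => exact ndec_bot t
  | cons a l ih =>
    exact ndec_or (h a (by simp)) (ih fun φ hφ => h φ (by simp [hφ]))

theorem ndec_foldl {t : NodeExpr A} (h : B → NodeExpr A) :
    ∀ (D : List B) (acc : NodeExpr A), NDec t acc → (∀ d ∈ D, NDec t (h d)) →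
      NDec t (D.foldl (fun acc d => .conj acc (h d)) acc) := by
  intro D
  induction D with
  | nil => intro acc ha _; exact ha
  | cons e D ih =>
    intro acc ha hd
    exact ih _ (ndec_conj ha (hd e (by simp))) (fun d hdm => hd d (by simp [hdm]))

theorem foldl_ext {γ : Type*} {f g : NodeExpr A → γ → NodeExpr A} :
    ∀ {D : List γ} (_ : ∀ acc d, d ∈ D → f acc d = g acc d) {a : NodeExpr A},
      D.foldl f a = D.foldl g a := by
  intro D
  induction D with
  | nil => intro _ a; rfl
  | cons e D ih =>
    intro h a
    rw [List.foldl_cons, List.foldl_cons, h a e (by simp)]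
    exact ih fun acc d hd => h acc d (by simp [hd])

theorem neg_ne (d : NodeExpr A) : NodeExpr.neg d ≠ d := by
  intro h
  have := congrArg (fun x : NodeExpr A => sizeOf x) h
  simp at this

end XPathMinus
set_option linter.unusedSectionVars false
set_option maxHeartbeats 1000000
namespace XPathMinus
variable {A : Type} {B : Type*} [Fintype A]

open NodeExpr PathExpr List

theorem bigOr_filter_drop {L : List (NodeExpr A)} {p : NodeExpr A → Bool}
    (h : ∀ x ∈ L, p x = false → NDer x botN) :
    NDer (bigOr L) (bigOr (L.filter p)) := by
  induction L with
  | nil => exact .refl _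
  | cons a L ih =>
    have ih' := ih fun x hx => h x (by simp [hx])
    by_cases hp : p a = true
    · rw [List.filter_cons_of_pos hp]; exact orCongr (.refl a) ih'
    · rw [List.filter_cons_of_neg (by simpa using hp)]
      exact (orCongr (h a (by simp) (by simpa using hp)) ih').trans (or_bot_left _)

theorem expand_foldl (pol : List (NodeExpr A) → NodeExpr A → NodeExpr A)
    (hpos : ∀ C d, d ∈ C → pol C d = d)
    (hneg : ∀ C d, d ∉ C → pol C d = .neg d) :
    ∀ (D : List (NodeExpr A)), D.Nodup → ∀ acc : NodeExpr A,
      NDer acc (bigOr (D.sublists.map fun C =>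
        D.foldl (fun acc d => .conj acc (pol C d)) acc)) := by
  intro D
  induction D with
  | nil =>
    intro _ acc
    exact (or_bot_right acc).symm
  | cons d₀ D ih =>
    intro hnd acc
    obtain ⟨hd₀, hnd'⟩ := List.nodup_cons.1 hnd
    have hsub : ∀ s ∈ D.sublists, d₀ ∉ s := fun s hs hmem =>
      hd₀ ((List.mem_sublists.1 hs).subset hmem)
    have hFs : ∀ s ∈ D.sublists,
        ((d₀ :: D).foldl (fun acc d => NodeExpr.conj acc (pol s d)) acc)
          = D.foldl (fun acc d => .conj acc (pol s d)) (.conj acc (.neg d₀)) := by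
      intro s hs
      rw [List.foldl_cons, hneg s d₀ (hsub s hs)]
    have hFds : ∀ s ∈ D.sublists,
        ((d₀ :: D).foldl (fun acc d => NodeExpr.conj acc (pol (d₀ :: s) d)) acc)
          = D.foldl (fun acc d => .conj acc (pol s d)) (.conj acc d₀) := by
      intro s hs
      rw [List.foldl_cons, hpos (d₀ :: s) d₀ (by simp)]
      refine foldl_ext (fun acc d hd => ?_)
      by_cases hds : d ∈ s
      · rw [hpos _ _ (by simp [hds]), hpos _ _ hds]
      · have hne : d ≠ d₀ := fun h => hd₀ (h ▸ hd)
        have hnm : d ∉ d₀ :: s := by simp [List.mem_cons, hds, hne]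
        rw [hneg _ _ hnm, hneg _ _ hds]
    have h1 : NDer acc (nOr (.conj acc (.neg d₀)) (.conj acc d₀)) :=
      (and_split acc d₀).trans (or_comm' _ _)
    have ihneg := ih hnd' (.conj acc (.neg d₀))
    have ihpos := ih hnd' (.conj acc d₀)
    have hsplit := bigOr_pair_split D.sublists
      (fun s => D.foldl (fun acc d => NodeExpr.conj acc (pol s d)) (.conj acc (.neg d₀)))
      (fun s => D.foldl (fun acc d => NodeExpr.conj acc (pol s d)) (.conj acc d₀))
    have hmap : NDer
        (bigOr (D.sublists.map fun s => nOr
          (D.foldl (fun acc d => NodeExpr.conj acc (pol s d)) (.conj acc (.neg d₀)))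
          (D.foldl (fun acc d => NodeExpr.conj acc (pol s d)) (.conj acc d₀))))
        (bigOr (D.sublists.map fun s => bigOr
          [(d₀ :: D).foldl (fun acc d => NodeExpr.conj acc (pol s d)) acc,
           (d₀ :: D).foldl (fun acc d => NodeExpr.conj acc (pol (d₀ :: s) d)) acc])) := by
      refine bigOr_map_congr fun s hs => ?_
      rw [hFs s hs, hFds s hs]
      exact (orCongr (.refl _) (or_bot_right _)).symm
    have hflat : NDer
        (bigOr (D.sublists.map fun s => bigOr
          [(d₀ :: D).foldl (fun acc d => NodeExpr.conj acc (pol s d)) acc,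
           (d₀ :: D).foldl (fun acc d => NodeExpr.conj acc (pol (d₀ :: s) d)) acc]))
        (bigOr (D.sublists.flatMap fun s =>
          [(d₀ :: D).foldl (fun acc d => NodeExpr.conj acc (pol s d)) acc,
           (d₀ :: D).foldl (fun acc d => NodeExpr.conj acc (pol (d₀ :: s) d)) acc])) :=
      (bigOr_flatMap _ _).symm
    have hlist : ((d₀ :: D).sublists.map fun C =>
        (d₀ :: D).foldl (fun acc d => NodeExpr.conj acc (pol C d)) acc)
        = D.sublists.flatMap fun s =>
          [(d₀ :: D).foldl (fun acc d => NodeExpr.conj acc (pol s d)) acc,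
           (d₀ :: D).foldl (fun acc d => NodeExpr.conj acc (pol (d₀ :: s) d)) acc] := by
      rw [List.sublists_cons]
      simp [List.map_flatMap]
    rw [hlist]
    exact (((h1.trans (orCongr ihneg ihpos)).trans hsplit.symm).trans hmap).trans hflat

theorem expand_mkNF {D : List (NodeExpr A)} (hD : D.Nodup) (a : A) :
    NDer (.lab a) (bigOr (D.sublists.map fun C => mkNF a C D)) :=
  expand_foldl (fun C d => if d ∈ C then d else .neg d)
    (fun _ _ h => if_pos h) (fun _ _ h => if_neg h) D hD (.lab a)

theorem mkNF_nle_lab (a : A) (C D : List (NodeExpr A)) : nle (mkNF a C D) (.lab a) :=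
  foldl_conj_nle_acc _ D _

theorem mkNF_nle_mem {d : NodeExpr A} (a : A) (C : List (NodeExpr A))
    {D : List (NodeExpr A)} (hd : d ∈ D) :
    nle (mkNF a C D) (if d ∈ C then d else .neg d) :=
  foldl_conj_nle_mem _ D _ hd

theorem mkNF_dec_atom {d : NodeExpr A} (a : A) (C : List (NodeExpr A))
    {D : List (NodeExpr A)} (hd : d ∈ D) : NDec (mkNF a C D) d := by
  by_cases h : d ∈ C
  · have h1 := mkNF_nle_mem a C hd; rw [if_pos h] at h1
    exact ndec_of_nle h1
  · have h1 := mkNF_nle_mem a C hd; rw [if_neg h] at h1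
    right
    have h2 : NDer (.conj (mkNF a C D) (.neg d)) (mkNF a C D) := (and_of_nle h1).symm
    exact (andCongr (.refl _) (dn d).symm).trans (and_neg_bot h2)

theorem mkNF_disj {a a' : A} {C C' D : List (NodeExpr A)}
    (hne : mkNF a C D ≠ mkNF a' C' D) :
    NDer (.conj (mkNF a C D) (mkNF a' C' D)) botN := by
  by_cases haa : a = a'
  · subst haa
    by_cases hCC : ∀ d ∈ D, (d ∈ C ↔ d ∈ C')
    · exfalso
      apply hne
      unfold mkNF
      exact foldl_ext fun acc d hd => by rw [if_congr (hCC d hd) rfl rfl]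
    · push_neg at hCC
      obtain ⟨d, hdD, hdiff⟩ := hCC
      rcases hdiff with ⟨h1, h2⟩ | ⟨h1, h2⟩
      · have e1 := mkNF_nle_mem a C hdD; rw [if_pos h1] at e1
        have e2 := mkNF_nle_mem a C' hdD; rw [if_neg h2] at e2
        exact nle_bot_eq (nle_trans (and_mono e1 e2) (nle_of_der (and_contra d)))
      · have e1 := mkNF_nle_mem a C hdD; rw [if_neg h1] at e1
        have e2 := mkNF_nle_mem a C' hdD; rw [if_pos h2] at e2
        exact nle_bot_eq (nle_trans (and_mono e1 e2)
          (nle_of_der ((and_comm' _ _).trans (and_contra d))))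
  · exact nle_bot_eq (nle_trans (and_mono (mkNF_nle_lab a C D) (mkNF_nle_lab a' C' D))
      (nle_of_der (NDer.lbAx2 haa).symm))

end XPathMinus
set_option linter.unusedSectionVars false
set_option maxHeartbeats 1000000
namespace XPathMinus
variable {A : Type} {B : Type*} [Fintype A]

open NodeExpr PathExpr List

/-- The list of atoms `⟨α=β⟩` over normal-form paths of level `n`. -/
noncomputable def DL (A : Type) [Fintype A] (n : ℕ) : List (NodeExpr A) :=
  (NF A n).1.flatMap fun α => (NF A n).1.map fun β => .eqTest α β

theorem NF_zero_fst : (NF A 0).1 = [.eps] := rfl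

theorem NF_zero_snd :
    (NF A 0).2 = (Finset.univ : Finset A).toList.map
      (fun a => NodeExpr.conj (.lab a) (.eqTest .eps .eps)) := rfl

theorem NF_succ_fst (n : ℕ) :
    (NF A (n+1)).1 = .eps :: (NF A n).2.flatMap
      (fun ψ => (NF A n).1.map fun β => PathExpr.comp .down (.comp (.test ψ) β)) := rfl

theorem NF_succ_snd (n : ℕ) :
    (NF A (n+1)).2 = ((DL A (n+1)).sublists.flatMap fun C =>
        (Finset.univ : Finset A).toList.map fun a => mkNF a C (DL A (n+1))).filter
      fun φ => decide (NConsistent φ) := rfl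

theorem eps_mem_PL (n : ℕ) : PathExpr.eps ∈ (NF A n).1 := by
  cases n with
  | zero => rw [NF_zero_fst]; simp
  | succ n => rw [NF_succ_fst]; simp

theorem mem_DL {n : ℕ} {d : NodeExpr A} :
    d ∈ DL A n ↔ ∃ α ∈ (NF A n).1, ∃ β ∈ (NF A n).1, d = .eqTest α β := by
  simp only [DL, List.mem_flatMap, List.mem_map]
  constructor
  · rintro ⟨α, hα, β, hβ, rfl⟩; exact ⟨α, hα, β, hβ, rfl⟩
  · rintro ⟨α, hα, β, hβ, rfl⟩; exact ⟨α, hα, β, hβ, rfl⟩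

theorem sublist_eq_of_mem_iff {γ : Type*} :
    ∀ {l : List γ}, l.Nodup → ∀ {l₁ l₂ : List γ}, l₁ <+ l → l₂ <+ l →
      (∀ x ∈ l, (x ∈ l₁ ↔ x ∈ l₂)) → l₁ = l₂ := by
  intro l
  induction l with
  | nil =>
    intro _ l₁ l₂ h1 h2 _
    rw [List.sublist_nil.1 h1, List.sublist_nil.1 h2]
  | cons x l ih =>
    intro hnd l₁ l₂ h1 h2 hiff
    obtain ⟨hx, hnd'⟩ := List.nodup_cons.1 hnd
    cases h1 with
    | cons _ h1' =>
      cases h2 with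
      | cons _ h2' =>
        exact ih hnd' h1' h2' fun y hy => hiff y (List.mem_cons_of_mem _ hy)
      | cons_cons _ h2' =>
        exfalso
        have hx1 : x ∈ l₁ := (hiff x (by simp)).2 (by simp)
        exact hx (h1'.subset hx1)
    | cons_cons _ h1' =>
      cases h2 with
      | cons _ h2' =>
        exfalso
        have hx2 : x ∈ l₂ := (hiff x (by simp)).1 (by simp)
        exact hx (h2'.subset hx2)
      | cons_cons _ h2' =>
        have : ∀ y ∈ l, (y ∈ _ ↔ y ∈ _) := fun y hy => by
          have hne : y ≠ x := fun h => hx (h ▸ hy)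
          have := hiff y (List.mem_cons_of_mem _ hy)
          simpa [List.mem_cons, hne] using this
        rw [ih hnd' h1' h2' this]

theorem foldl_comb_inj {h h' : B → NodeExpr A} :
    ∀ (D : List B) {x y : NodeExpr A},
      D.foldl (fun acc d => .conj acc (h d)) x = D.foldl (fun acc d => .conj acc (h' d)) y →
      x = y ∧ ∀ d ∈ D, h d = h' d := by
  intro D
  induction D using List.reverseRecOn with
  | nil => intro x y hxy; exact ⟨hxy, by simp⟩
  | append_singleton D d ih =>
    intro x y hxy
    rw [List.foldl_append, List.foldl_append] at hxy
    simp only [List.foldl_cons, List.foldl_nil] at hxy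
    obtain ⟨h1, h2⟩ := NodeExpr.conj.inj hxy
    obtain ⟨hacc, hmem⟩ := ih h1
    refine ⟨hacc, fun e he => ?_⟩
    rcases List.mem_append.1 he with he | he
    · exact hmem e he
    · rw [List.mem_singleton.1 he]; exact h2

theorem ite_inj_mem {d : NodeExpr A} {C C' : List (NodeExpr A)}
    (h : (if d ∈ C then d else NodeExpr.neg d) = (if d ∈ C' then d else .neg d)) :
    d ∈ C ↔ d ∈ C' := by
  by_cases h1 : d ∈ C <;> by_cases h2 : d ∈ C' <;>
    simp [h1, h2] at h ⊢
  · exact (neg_ne d h.symm).elim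
  · exact (neg_ne d h).elim

theorem mkNF_inj {D : List (NodeExpr A)} (hD : D.Nodup) {a a' : A}
    {C C' : List (NodeExpr A)} (hC : C <+ D) (hC' : C' <+ D)
    (h : mkNF a C D = mkNF a' C' D) : a = a' ∧ C = C' := by
  unfold mkNF at h
  obtain ⟨hlab, hlit⟩ := foldl_comb_inj D h
  refine ⟨NodeExpr.lab.inj hlab, ?_⟩
  exact sublist_eq_of_mem_iff hD hC hC' fun d hd => ite_inj_mem (hlit d hd)

theorem nodup_flatMap_map {α β γ : Type*} {l1 : List α} {l2 : List β} {f : α → β → γ}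
    (h1 : l1.Nodup) (h2 : l2.Nodup)
    (hinj : ∀ a ∈ l1, ∀ a' ∈ l1, ∀ b ∈ l2, ∀ b' ∈ l2, f a b = f a' b' → a = a' ∧ b = b') :
    (l1.flatMap fun a => l2.map (f a)).Nodup := by
  rw [List.nodup_flatMap]
  constructor
  · intro a ha
    exact h2.map_on fun b hb b' hb' hf => ((hinj a ha a ha b hb b' hb' hf).2).symm ▸ rfl
  · refine List.Pairwise.imp_of_mem ?_ h1
    intro a a' ha ha' hne
    intro L hL hL'
    simp only [List.mem_map] at hL hL'
    obtain ⟨b, hb, rfl⟩ := hL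
    obtain ⟨b', hb', hf⟩ := hL'
    exact hne ((hinj a' ha' a ha b' hb' b hb hf).1).symm

theorem PL_NL_nodup (n : ℕ) : ((NF A n).1.Nodup) ∧ ((NF A n).2.Nodup) := by
  induction n with
  | zero =>
    constructor
    · rw [NF_zero_fst]; simp
    · rw [NF_zero_snd]
      exact (Finset.univ.nodup_toList).map_on fun a _ b _ h => by
        exact NodeExpr.lab.inj (NodeExpr.conj.inj h).1
  | succ n ih =>
    obtain ⟨hP, hN⟩ := ih
    have hP' : ((NF A (n+1)).1).Nodup := by
      rw [NF_succ_fst]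
      refine List.nodup_cons.2 ⟨?_, ?_⟩
      · simp only [List.mem_flatMap, List.mem_map]
        rintro ⟨ψ, -, β, -, h⟩
        cases h
      · exact nodup_flatMap_map hN hP fun ψ _ ψ' _ β _ β' _ h => by
          obtain ⟨-, h2⟩ := PathExpr.comp.inj h
          obtain ⟨h3, h4⟩ := PathExpr.comp.inj h2
          exact ⟨PathExpr.test.inj h3, h4⟩
    have hD : (DL A (n+1)).Nodup :=
      nodup_flatMap_map hP' hP' fun α _ α' _ β _ β' _ h => NodeExpr.eqTest.inj h
    refine ⟨hP', ?_⟩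
    rw [NF_succ_snd]
    refine List.Nodup.filter _ ?_
    exact nodup_flatMap_map (List.nodup_sublists.2 hD) Finset.univ.nodup_toList
      fun C hC C' hC' a _ a' _ h => by
        obtain ⟨ha, hCeq⟩ := mkNF_inj hD (List.mem_sublists.1 hC) (List.mem_sublists.1 hC') h
        exact ⟨hCeq, ha⟩

theorem DL_nodup (n : ℕ) : (DL A n).Nodup :=
  nodup_flatMap_map (PL_NL_nodup n).1 (PL_NL_nodup n).1
    fun α _ α' _ β _ β' _ h => NodeExpr.eqTest.inj h

/-- Coverage: `⊤` is provably the disjunction of all normal forms of level `n`. -/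
theorem cover (n : ℕ) : NDer (topN : NodeExpr A) (bigOr (NF A n).2) := by
  cases n with
  | zero =>
    rw [NF_zero_snd]
    refine NDer.lbAx1.trans (bigOr_map_congr fun a _ => ?_)
    exact (and_top_right _).symm.trans (andCongr (.refl _) (NDer.eqAx6 .eps).symm)
  | succ n =>
    have hD := DL_nodup (A := A) (n+1)
    have h1 : NDer (topN : NodeExpr A)
        (bigOr ((Finset.univ : Finset A).toList.map fun a =>
          bigOr ((DL A (n+1)).sublists.map fun C => mkNF a C (DL A (n+1))))) :=
      NDer.lbAx1.trans (bigOr_map_congr fun a _ => expand_mkNF hD a)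
    have h2 : NDer (topN : NodeExpr A)
        (bigOr ((Finset.univ : Finset A).toList.flatMap fun a =>
          (DL A (n+1)).sublists.map fun C => mkNF a C (DL A (n+1)))) :=
      h1.trans (bigOr_flatMap _ _).symm
    have h3 : NDer (topN : NodeExpr A)
        (bigOr ((DL A (n+1)).sublists.flatMap fun C =>
          (Finset.univ : Finset A).toList.map fun a => mkNF a C (DL A (n+1)))) := by
      refine h2.trans (bigOr_equiv ?_ ?_)
      · intro φ hφ
        simp only [List.mem_flatMap, List.mem_map] at hφ ⊢
        obtain ⟨a, ha, C, hC, rfl⟩ := hφ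
        exact ⟨C, hC, a, ha, rfl⟩
      · intro φ hφ
        simp only [List.mem_flatMap, List.mem_map] at hφ ⊢
        obtain ⟨C, hC, a, ha, rfl⟩ := hφ
        exact ⟨a, ha, C, hC, rfl⟩
    rw [NF_succ_snd]
    refine h3.trans (bigOr_filter_drop fun t _ ht => ?_)
    have : ¬ NConsistent t := by
      intro hc
      rw [decide_eq_false_iff_not] at ht
      exact ht hc
    unfold NConsistent at this
    exact not_not.1 this

/-- Every normal form of level `n+1` has shape `mkNF`. -/
theorem mem_NL_succ {n : ℕ} {t : NodeExpr A} (ht : t ∈ (NF A (n+1)).2) :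
    ∃ C, C <+ DL A (n+1) ∧ ∃ a : A, t = mkNF a C (DL A (n+1)) := by
  rw [NF_succ_snd] at ht
  have := List.mem_of_mem_filter ht
  simp only [List.mem_flatMap, List.mem_map] at this
  obtain ⟨C, hC, a, -, rfl⟩ := this
  exact ⟨C, List.mem_sublists.1 hC, a, rfl⟩

theorem mem_NL_zero {t : NodeExpr A} (ht : t ∈ (NF A 0).2) :
    ∃ a : A, t = .conj (.lab a) (.eqTest .eps .eps) := by
  rw [NF_zero_snd] at ht
  simp only [List.mem_map] at ht
  obtain ⟨a, -, rfl⟩ := ht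
  exact ⟨a, rfl⟩

/-- Types decide label atoms. -/
theorem ndec_type_lab {n : ℕ} {t : NodeExpr A} (ht : t ∈ (NF A n).2) (b : A) :
    NDec t (.lab b) := by
  have hlab : ∃ a : A, nle t (.lab a) := by
    cases n with
    | zero =>
      obtain ⟨a, rfl⟩ := mem_NL_zero ht
      exact ⟨a, nle_and_left _ _⟩
    | succ n =>
      obtain ⟨C, -, a, rfl⟩ := mem_NL_succ ht
      exact ⟨a, mkNF_nle_lab a C _⟩
  obtain ⟨a, ha⟩ := hlab
  by_cases hab : a = b
  · subst hab; exact ndec_of_nle ha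
  · right
    exact nle_bot_eq (nle_trans (and_mono ha (nle_refl _))
      (nle_of_der (NDer.lbAx2 hab).symm))

theorem ndec_type_eq {n : ℕ} {t : NodeExpr A} {α β : PathExpr A}
    (ht : t ∈ (NF A n).2) (hα : α ∈ (NF A n).1) (hβ : β ∈ (NF A n).1) :
    NDec t (.eqTest α β) := by
  cases n with
  | zero =>
    rw [NF_zero_fst] at hα hβ
    rw [List.mem_singleton.1 hα, List.mem_singleton.1 hβ]
    exact ndec_congr (NDer.eqAx6 .eps).symm (ndec_top t)
  | succ n =>
    obtain ⟨C, -, a, rfl⟩ := mem_NL_succ ht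
    refine mkNF_dec_atom a C ?_
    exact mem_DL.2 ⟨α, hα, β, hβ, rfl⟩

/-- Distinct types of the same level are provably disjoint. -/
theorem type_disjoint {n : ℕ} {t t' : NodeExpr A} (ht : t ∈ (NF A n).2)
    (ht' : t' ∈ (NF A n).2) (hne : t ≠ t') : NDer (.conj t t') botN := by
  cases n with
  | zero =>
    obtain ⟨a, rfl⟩ := mem_NL_zero ht
    obtain ⟨a', rfl⟩ := mem_NL_zero ht'
    have haa : a ≠ a' := fun h => hne (by rw [h])
    exact nle_bot_eq (nle_trans
      (and_mono (nle_and_left _ _) (nle_and_left _ _))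
      (nle_of_der (NDer.lbAx2 haa).symm))
  | succ n =>
    obtain ⟨C, -, a, rfl⟩ := mem_NL_succ ht
    obtain ⟨C', -, a', rfl⟩ := mem_NL_succ ht'
    exact mkNF_disj hne

/-- A type decides any disjunction of types of its level. -/
theorem ndec_type_bigOr {n : ℕ} {t : NodeExpr A} (ht : t ∈ (NF A n).2)
    {l : List (NodeExpr A)} (hl : ∀ ψ ∈ l, ψ ∈ (NF A n).2) : NDec t (bigOr l) := by
  refine ndec_bigOr fun ψ hψ => ?_
  by_cases hts : t = ψ
  · subst hts; exact Or.inl (and_idem t)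
  · exact Or.inr (type_disjoint ht (hl ψ hψ) hts)

end XPathMinus
set_option linter.unusedSectionVars false
set_option maxHeartbeats 1000000
namespace XPathMinus
variable {A : Type} {B : Type*} [Fintype A]

open NodeExpr PathExpr List

theorem bigOr_single (φ : NodeExpr A) : NDer (bigOr [φ]) φ := or_bot_right φ

theorem bigUnion_single (α : PathExpr A) : PDer (bigUnion [α]) α :=
  (PDer.isAx2 _ _).trans (.isAx7 _)

theorem comp_bigUnion_both (l1 l2 : List (PathExpr A)) :
    PDer (.comp (bigUnion l1) (bigUnion l2))
      (bigUnion (l1.flatMap fun x => l2.map fun y => .comp x y)) := by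
  have h1 : PDer (PathExpr.comp (bigUnion l1) (bigUnion l2))
      (bigUnion (l1.map fun x => .comp x (bigUnion l2))) := comp_bigUnion_l l1 _
  have h2 : PDer (bigUnion (l1.map fun x => PathExpr.comp x (bigUnion l2)))
      (bigUnion (l1.map fun x => bigUnion (l2.map fun y => .comp x y))) :=
    bigUnion_map_congr fun x _ => comp_bigUnion_r l2 x
  exact (h1.trans h2).trans (bigUnion_flatMap l1 fun x => l2.map fun y => .comp x y).symm

theorem eq_bigUnion_both (l1 l2 : List (PathExpr A)) :
    NDer (.eqTest (bigUnion l1) (bigUnion l2))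
      (bigOr (l1.flatMap fun x => l2.map fun y => .eqTest x y)) := by
  have h1 : NDer (NodeExpr.eqTest (bigUnion l1) (bigUnion l2))
      (bigOr (l1.map fun x => .eqTest x (bigUnion l2))) := eq_bigUnion_l l1 _
  have h2 : NDer (bigOr (l1.map fun x => NodeExpr.eqTest x (bigUnion l2)))
      (bigOr (l1.map fun x => bigOr (l2.map fun y => .eqTest x y))) := by
    refine bigOr_map_congr fun x _ => ?_
    exact ((NDer.eqAx1 _ _).trans (eq_bigUnion_l l2 x)).trans
      (bigOr_map_congr fun y _ => NDer.eqAx1 _ _)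
  exact (h1.trans h2).trans (bigOr_flatMap l1 fun x => l2.map fun y => .eqTest x y).symm

/-- Selection: if every type of level `n` decides `φ`, then `φ` is provably a
disjunction of types of level `n`. -/
theorem select {n : ℕ} {φ : NodeExpr A} (h : ∀ t ∈ (NF A n).2, NDec t φ) :
    ∃ l : List (NodeExpr A), (∀ t ∈ l, t ∈ (NF A n).2) ∧ NDer φ (bigOr l) := by
  refine ⟨(NF A n).2.filter (fun t => decide (NDer (.conj t φ) t)),
    fun t htm => List.mem_of_mem_filter htm, ?_⟩
  have h1 : NDer φ (bigOr ((NF A n).2.map fun t => .conj t φ)) := by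
    have s1 : NDer φ (.conj φ (bigOr (NF A n).2)) :=
      (and_top_right φ).symm.trans (andCongr (.refl φ) (cover n))
    have s2 := and_bigOr φ (NF A n).2
    exact (s1.trans s2).trans (bigOr_map_congr fun t _ => and_comm' φ t)
  have h2 : NDer (bigOr ((NF A n).2.map fun t => NodeExpr.conj t φ))
      (bigOr (((NF A n).2.filter (fun t => decide (NDer (.conj t φ) t))).map fun t => t)) := by
    refine bigOr_reduce (fun t htm hp => of_decide_eq_true hp) (fun t htm hp => ?_)
    rcases h t htm with hd | hd
    · exact absurd (decide_eq_true hd) (by simp [hp])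
    · exact hd
  rw [List.map_id'] at h2
  exact h1.trans h2

/-- Lifting normal forms from level `m` to any level `n ≥ m`. -/
theorem lift : ∀ (m n : ℕ), m ≤ n →
    (∀ γ ∈ (NF A m).1, ∃ l : List (PathExpr A),
      (∀ β ∈ l, β ∈ (NF A n).1 ∧ plen β = plen γ) ∧ PDer γ (bigUnion l)) ∧
    (∀ ψ ∈ (NF A m).2, ∃ l : List (NodeExpr A),
      (∀ t ∈ l, t ∈ (NF A n).2) ∧ NDer ψ (bigOr l)) := by
  intro m
  induction m with
  | zero =>
    intro n _
    constructor
    · intro γ hγ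
      rw [NF_zero_fst, List.mem_singleton] at hγ
      subst hγ
      exact ⟨[.eps], fun β hβ => by
        rw [List.mem_singleton.1 hβ]; exact ⟨eps_mem_PL n, rfl⟩,
        (bigUnion_single .eps).symm⟩
    · intro ψ hψ
      obtain ⟨a, rfl⟩ := mem_NL_zero hψ
      refine select fun t htm => ?_
      exact ndec_conj (ndec_type_lab htm a)
        (ndec_congr (NDer.eqAx6 .eps).symm (ndec_top t))
  | succ m ih =>
    intro n hmn
    obtain ⟨n', rfl⟩ : ∃ n', n = n' + 1 := ⟨n - 1, by omega⟩
    have hmn' : m ≤ n' := by omega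
    obtain ⟨ihP, ihN⟩ := ih n' hmn'
    have pathPart : ∀ γ ∈ (NF A (m+1)).1, ∃ l : List (PathExpr A),
        (∀ β ∈ l, β ∈ (NF A (n'+1)).1 ∧ plen β = plen γ) ∧ PDer γ (bigUnion l) := by
      intro γ hγ
      rw [NF_succ_fst] at hγ
      rcases List.mem_cons.1 hγ with rfl | hγ
      · exact ⟨[.eps], fun β hβ => by
          rw [List.mem_singleton.1 hβ]; exact ⟨eps_mem_PL _, rfl⟩,
          (bigUnion_single .eps).symm⟩
      · simp only [List.mem_flatMap, List.mem_map] at hγ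
        obtain ⟨ψ, hψ, β, hβ, rfl⟩ := hγ
        obtain ⟨ts, hts, hψd⟩ := ihN ψ hψ
        obtain ⟨bs, hbs, hβd⟩ := ihP β hβ
        refine ⟨ts.flatMap fun t => bs.map fun b => .comp .down (.comp (.test t) b),
          ?_, ?_⟩
        · intro δ hδ
          simp only [List.mem_flatMap, List.mem_map] at hδ
          obtain ⟨t, htm, b, hbm, rfl⟩ := hδ
          constructor
          · rw [NF_succ_fst]
            refine List.mem_cons_of_mem _ ?_
            simp only [List.mem_flatMap, List.mem_map]
            exact ⟨t, hts t htm, b, (hbs b hbm).1, rfl⟩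
          · simp [plen, (hbs b hbm).2]
        · have s1 : PDer (PathExpr.comp .down (.comp (.test ψ) β))
              (.comp .down (.comp (bigUnion (ts.map .test)) (bigUnion bs))) :=
            .congr_comp (.refl _) (.congr_comp
              ((PDer.congr_test hψd).trans (test_bigOr ts)) hβd)
          have s2 : PDer (PathExpr.comp (bigUnion (ts.map PathExpr.test)) (bigUnion bs))
              (bigUnion ((ts.map PathExpr.test).flatMap fun x => bs.map fun y => .comp x y)) :=
            comp_bigUnion_both _ _
          have s3 : PDer (PathExpr.comp .down
              (bigUnion ((ts.map PathExpr.test).flatMap fun x => bs.map fun y => .comp x y)))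
              (bigUnion (((ts.map PathExpr.test).flatMap fun x =>
                bs.map fun y => .comp x y).map fun z => .comp .down z)) :=
            comp_bigUnion_r _ _
          have s4 := (s1.trans (.congr_comp (.refl _) s2)).trans s3
          refine s4.trans ?_
          have : (((ts.map PathExpr.test).flatMap fun x =>
              bs.map fun y => PathExpr.comp x y).map fun z => PathExpr.comp .down z)
              = ts.flatMap fun t => bs.map fun b =>
                  PathExpr.comp .down (.comp (.test t) b) := by
            rw [List.flatMap_map, List.map_flatMap]
            simp [List.map_map, Function.comp_def]
          rw [this]
          exact .refl _
    refine ⟨pathPart, ?_⟩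
    intro ψ hψ
    obtain ⟨C, -, a, rfl⟩ := mem_NL_succ hψ
    refine select fun t htm => ?_
    unfold mkNF
    refine ndec_foldl _ _ _ (ndec_type_lab htm a) ?_
    intro d hd
    obtain ⟨α, hα, β, hβ, rfl⟩ := mem_DL.1 hd
    have hdec : NDec t (NodeExpr.eqTest α β) := by
      obtain ⟨as, has, hαd⟩ := pathPart α hα
      obtain ⟨bs, hbs, hβd⟩ := pathPart β hβ
      have hchain : NDer (NodeExpr.eqTest α β)
          (bigOr (as.flatMap fun x => bs.map fun y => .eqTest x y)) :=
        (NDer.congr_eqTest hαd hβd).trans (eq_bigUnion_both as bs)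
      refine ndec_congr hchain.symm (ndec_bigOr fun e he => ?_)
      simp only [List.mem_flatMap, List.mem_map] at he
      obtain ⟨x, hx, y, hy, rfl⟩ := he
      exact ndec_type_eq htm (has x hx).1 (hbs y hy).1
    by_cases hC : (NodeExpr.eqTest α β) ∈ C
    · rw [if_pos hC]; exact hdec
    · rw [if_neg hC]; exact ndec_neg hdec

end XPathMinus
set_option linter.unusedSectionVars false
set_option maxHeartbeats 1000000
namespace XPathMinus
variable {A : Type} {B : Type*} [Fintype A]

open NodeExpr PathExpr List

/-- `α` is provably a union of guarded normal forms `[t]σ` of level `n`,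
with `plen σ ≤ b`. -/
def GoodP (n b : ℕ) (α : PathExpr A) : Prop :=
  ∃ l : List (NodeExpr A × PathExpr A),
    (∀ p ∈ l, p.1 ∈ (NF A n).2 ∧ p.2 ∈ (NF A n).1 ∧ plen p.2 ≤ b) ∧
    PDer α (bigUnion (l.map fun p => .comp (.test p.1) p.2))

/-- `α` is provably a union of down-starting normal forms of level `n`. -/
def GoodD (n b : ℕ) (α : PathExpr A) : Prop :=
  ∃ l : List (PathExpr A),
    (∀ β ∈ l, β ∈ (NF A n).1 ∧ plen β ≤ b ∧ startsWithDown β) ∧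
    PDer α (bigUnion l)

theorem goodP_congr {n b : ℕ} {α α' : PathExpr A} (h : PDer α' α)
    (hg : GoodP n b α) : GoodP n b α' := by
  obtain ⟨l, hl, hd⟩ := hg
  exact ⟨l, hl, h.trans hd⟩

theorem goodD_congr {n b : ℕ} {α α' : PathExpr A} (h : PDer α' α)
    (hg : GoodD n b α) : GoodD n b α' := by
  obtain ⟨l, hl, hd⟩ := hg
  exact ⟨l, hl, h.trans hd⟩

theorem goodP_mono {n b b' : ℕ} {α : PathExpr A} (h : b ≤ b')
    (hg : GoodP n b α) : GoodP n b' α := by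
  obtain ⟨l, hl, hd⟩ := hg
  exact ⟨l, fun p hp => ⟨(hl p hp).1, (hl p hp).2.1, le_trans (hl p hp).2.2 h⟩, hd⟩

theorem goodD_mono {n b b' : ℕ} {α : PathExpr A} (h : b ≤ b')
    (hg : GoodD n b α) : GoodD n b' α := by
  obtain ⟨l, hl, hd⟩ := hg
  exact ⟨l, fun p hp => ⟨(hl p hp).1, le_trans (hl p hp).2.1 h, (hl p hp).2.2⟩, hd⟩

theorem goodP_bot {n b : ℕ} : GoodP n b (botP : PathExpr A) :=
  ⟨[], by simp, .refl _⟩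

theorem goodD_bot {n b : ℕ} : GoodD n b (botP : PathExpr A) :=
  ⟨[], by simp, .refl _⟩

theorem goodP_union {n b : ℕ} {α β : PathExpr A} (hα : GoodP n b α)
    (hβ : GoodP n b β) : GoodP n b (.union α β) := by
  obtain ⟨l1, hl1, hd1⟩ := hα
  obtain ⟨l2, hl2, hd2⟩ := hβ
  refine ⟨l1 ++ l2, ?_, ?_⟩
  · intro p hp
    rcases List.mem_append.1 hp with hp | hp
    · exact hl1 p hp
    · exact hl2 p hp
  · rw [List.map_append]
    exact (PDer.congr_union hd1 hd2).trans (bigUnion_append _ _).symm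

theorem goodD_union {n b : ℕ} {α β : PathExpr A} (hα : GoodD n b α)
    (hβ : GoodD n b β) : GoodD n b (.union α β) := by
  obtain ⟨l1, hl1, hd1⟩ := hα
  obtain ⟨l2, hl2, hd2⟩ := hβ
  refine ⟨l1 ++ l2, ?_, ?_⟩
  · intro p hp
    rcases List.mem_append.1 hp with hp | hp
    · exact hl1 p hp
    · exact hl2 p hp
  · exact (PDer.congr_union hd1 hd2).trans (bigUnion_append _ _).symm

theorem goodP_bigUnion {n b : ℕ} {L : List B} {f : B → PathExpr A}
    (h : ∀ x ∈ L, GoodP n b (f x)) : GoodP n b (bigUnion (L.map f)) := by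
  induction L with
  | nil => exact goodP_bot
  | cons x L ih =>
    exact goodP_union (h x (by simp)) (ih fun y hy => h y (by simp [hy]))

theorem goodD_bigUnion {n b : ℕ} {L : List B} {f : B → PathExpr A}
    (h : ∀ x ∈ L, GoodD n b (f x)) : GoodD n b (bigUnion (L.map f)) := by
  induction L with
  | nil => exact goodD_bot
  | cons x L ih =>
    exact goodD_union (h x (by simp)) (ih fun y hy => h y (by simp [hy]))

/-- Prefixing by a type test preserves `GoodP`. -/
theorem goodP_test_comp {n b : ℕ} {t : NodeExpr A} (ht : t ∈ (NF A n).2)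
    {α : PathExpr A} (hg : GoodP n b α) : GoodP n b (.comp (.test t) α) := by
  obtain ⟨l, hl, hd⟩ := hg
  have h1 : PDer (PathExpr.comp (.test t) α)
      (bigUnion (l.map fun p => .comp (.test t) (.comp (.test p.1) p.2))) := by
    have := (PDer.congr_comp (.refl (.test t)) hd).trans
      (comp_bigUnion_r (l.map fun p => .comp (.test p.1) p.2) (.test t))
    rwa [List.map_map] at this
  have h2 : PDer (bigUnion (l.map fun p => PathExpr.comp (.test t) (.comp (.test p.1) p.2)))
      (bigUnion ((l.filter fun p => decide (p.1 = t)).map fun p => .comp (.test t) p.2)) := by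
    refine bigUnion_reduce (fun p hp hpos => ?_) (fun p hp hneg => ?_)
    · have hpt : p.1 = t := of_decide_eq_true hpos
      have s1 : PDer (PathExpr.comp (.test t) (.comp (.test p.1) p.2))
          (.comp (.test (.conj t p.1)) p.2) :=
        (PDer.isAx4 _ _ _).trans (.congr_comp (test_merge t p.1) (.refl _))
      refine s1.trans (.congr_comp (.congr_test ?_) (.refl _))
      rw [hpt]; exact and_idem t
    · have hpt : p.1 ≠ t := fun h => by simp [h] at hneg
      have s1 : PDer (PathExpr.comp (.test t) (.comp (.test p.1) p.2))
          (.comp (.test (.conj t p.1)) p.2) :=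
        (PDer.isAx4 _ _ _).trans (.congr_comp (test_merge t p.1) (.refl _))
      have s2 : NDer (NodeExpr.conj t p.1) botN :=
        type_disjoint ht (hl p hp).1 (fun h => hpt h.symm)
      exact (s1.trans (.congr_comp (.congr_test s2) (.refl _))).trans (comp_bot_l p.2)
  refine ⟨(l.filter fun p => decide (p.1 = t)).map fun p => (t, p.2), ?_, ?_⟩
  · intro p hp
    simp only [List.mem_map] at hp
    obtain ⟨q, hq, rfl⟩ := hp
    exact ⟨ht, (hl q (List.mem_of_mem_filter hq)).2.1,
      (hl q (List.mem_of_mem_filter hq)).2.2⟩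
  · rw [List.map_map]
    exact h1.trans h2

/-- Wrapping in `↓[ψ]·` turns level-`n` pairs into level-`n+1` down-starting forms. -/
theorem goodD_down_test {n b : ℕ} {ψ : NodeExpr A} (hψ : ψ ∈ (NF A n).2)
    {α : PathExpr A} (hg : GoodP n b α) :
    GoodD (n+1) (b+1) (.comp .down (.comp (.test ψ) α)) := by
  obtain ⟨l, hl, hd⟩ := goodP_test_comp hψ hg
  have h1 : PDer (PathExpr.comp .down (.comp (.test ψ) α))
      (bigUnion (l.map fun p => .comp .down (.comp (.test p.1) p.2))) := by
    have := (PDer.congr_comp (.refl .down) hd).trans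
      (comp_bigUnion_r (l.map fun p => .comp (.test p.1) p.2) .down)
    rwa [List.map_map] at this
  refine ⟨l.map fun p => .comp .down (.comp (.test p.1) p.2), ?_, ?_⟩
  · intro β hβ
    simp only [List.mem_map] at hβ
    obtain ⟨p, hp, rfl⟩ := hβ
    refine ⟨?_, ?_, ?_⟩
    · rw [NF_succ_fst]
      refine List.mem_cons_of_mem _ ?_
      simp only [List.mem_flatMap, List.mem_map]
      exact ⟨p.1, (hl p hp).1, p.2, (hl p hp).2.1, rfl⟩
    · have := (hl p hp).2.2
      simp [plen]; omega
    · exact trivial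
  · exact h1

/-- Down-starting unions can be re-guarded by types (`pure → pairs`). -/
theorem goodD_to_goodP {n b : ℕ} {α : PathExpr A} (hg : GoodD n b α) :
    GoodP n b α := by
  obtain ⟨l, hl, hd⟩ := hg
  have h1 : ∀ β ∈ l, PDer β (bigUnion ((NF A n).2.map fun t => .comp (.test t) β)) := by
    intro β hβ
    have s1 : PDer β (.comp (.test (bigOr (NF A n).2)) β) :=
      ((PDer.isAx5l β).symm.trans (.congr_comp (PDer.prAx2.symm.trans
        (.congr_test (cover n))) (.refl β)))
    have s2 := (s1.trans (.congr_comp (test_bigOr _) (.refl β))).trans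
      (comp_bigUnion_l _ β)
    rwa [List.map_map] at s2
  have hstep : ∀ l' : List (PathExpr A), (∀ β ∈ l', β ∈ l) →
      PDer (bigUnion l') (bigUnion (l'.map fun β =>
        bigUnion ((NF A n).2.map fun t => .comp (.test t) β))) := by
    intro l'
    induction l' with
    | nil => intro _; exact .refl _
    | cons a l' ih =>
      intro hmem
      exact .congr_union (h1 a (hmem a (by simp)))
        (ih fun β hβ => hmem β (by simp [hβ]))
  have h2 : PDer α (bigUnion (l.map fun β =>
      bigUnion ((NF A n).2.map fun t => .comp (.test t) β))) :=
    hd.trans (hstep l fun β hβ => hβ)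
  refine ⟨l.flatMap fun β => (NF A n).2.map fun t => (t, β), ?_, ?_⟩
  · intro p hp
    simp only [List.mem_flatMap, List.mem_map] at hp
    obtain ⟨β, hβ, t, htm, rfl⟩ := hp
    exact ⟨htm, (hl β hβ).1, (hl β hβ).2.1⟩
  · refine h2.trans ?_
    have : (l.flatMap fun β => (NF A n).2.map fun t => ((t, β) : NodeExpr A × PathExpr A)).map
        (fun p => PathExpr.comp (.test p.1) p.2)
        = l.flatMap fun β => (NF A n).2.map fun t => .comp (.test t) β := by
      rw [List.map_flatMap]
      simp [List.map_map, Function.comp_def]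
    rw [this]
    exact (bigUnion_flatMap l fun β => (NF A n).2.map fun t => .comp (.test t) β).symm

end XPathMinus
set_option linter.unusedSectionVars false
set_option maxHeartbeats 1000000
namespace XPathMinus
variable {A : Type} {B : Type*} [Fintype A]

open NodeExpr PathExpr List

theorem dpath_assoc (ψ : NodeExpr A) (γ₂ X : PathExpr A) :
    PDer (.comp (.comp .down (.comp (.test ψ) γ₂)) X)
      (.comp .down (.comp (.test ψ) (.comp γ₂ X))) := by
  have h1 : PDer (PathExpr.comp .down (.comp (.comp (.test ψ) γ₂) X))
      (.comp (.comp .down (.comp (.test ψ) γ₂)) X) := PDer.isAx4 _ _ _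
  have h2 : PDer (PathExpr.comp (.test ψ) (.comp γ₂ X))
      (.comp (.comp (.test ψ) γ₂) X) := PDer.isAx4 _ _ _
  exact h1.symm.trans (.congr_comp (.refl _) h2.symm)

theorem lemB : ∀ (n : ℕ), ∀ γ ∈ (NF A n).1, ∀ (k : ℕ) (χ : NodeExpr A) (δ : PathExpr A),
    χ ∈ (NF A k).2 → δ ∈ (NF A k).1 → plen γ + k ≤ n →
    GoodP n (plen γ + plen δ) (.comp γ (.comp (.test χ) δ)) ∧
    (γ ≠ .eps → GoodD n (plen γ + plen δ) (.comp γ (.comp (.test χ) δ))) := by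
  intro n
  induction n with
  | zero =>
    intro γ hγ k χ δ hχ hδ hlen
    rw [NF_zero_fst, List.mem_singleton] at hγ
    subst hγ
    have hk : k = 0 := by simpa [plen] using hlen
    subst hk
    rw [NF_zero_fst, List.mem_singleton] at hδ
    subst hδ
    refine ⟨⟨[(χ, .eps)], ?_, ?_⟩, fun h => absurd rfl h⟩
    · intro p hp
      rw [List.mem_singleton.1 hp]
      exact ⟨hχ, eps_mem_PL 0, by simp [plen]⟩
    · exact (PDer.isAx5l _).trans (bigUnion_single _).symm
  | succ n' ih =>
    intro γ hγ k χ δ hχ hδ hlen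
    rw [NF_succ_fst] at hγ
    rcases List.mem_cons.1 hγ with rfl | hγ
    · -- γ = ε
    
      have hk : k ≤ n' + 1 := by simpa [plen] using hlen
      obtain ⟨liftP, liftN⟩ := lift (A := A) k (n'+1) hk
      obtain ⟨ts, hts, hχd⟩ := liftN χ hχ
      obtain ⟨bs, hbs, hδd⟩ := liftP δ hδ
      have hchain : PDer (PathExpr.comp .eps (.comp (.test χ) δ))
          (bigUnion ((ts.map PathExpr.test).flatMap fun x => bs.map fun y => .comp x y)) := by
        refine (PDer.isAx5l _).trans ?_
        refine (PDer.congr_comp ((PDer.congr_test hχd).trans (test_bigOr ts)) hδd).trans ?_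
        exact comp_bigUnion_both _ _
      refine ⟨goodP_congr hchain ?_, fun h => absurd rfl h⟩
      refine goodP_congr (bigUnion_flatMap _ _) (goodP_bigUnion ?_)
      intro x hx
      simp only [List.mem_map] at hx
      obtain ⟨t, htm, rfl⟩ := hx
      refine goodP_bigUnion ?_
      intro b hb
      refine ⟨[(t, b)], ?_, (bigUnion_single _).symm⟩
      intro p hp
      rw [List.mem_singleton.1 hp]
      refine ⟨hts t htm, (hbs b hb).1, ?_⟩
      rw [(hbs b hb).2]
      simp [plen]
    · -- γ = ↓[ψ]γ₂
      simp only [List.mem_flatMap, List.mem_map] at hγ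
      obtain ⟨ψ, hψ, γ₂, hγ₂, rfl⟩ := hγ
      have hlen' : plen γ₂ + k ≤ n' := by
        simp only [plen] at hlen ⊢
        omega
      have ihg := (ih γ₂ hγ₂ k χ δ hχ hδ hlen').1
      have hD : GoodD (n'+1) ((plen γ₂ + plen δ) + 1)
          (.comp .down (.comp (.test ψ) (.comp γ₂ (.comp (.test χ) δ)))) :=
        goodD_down_test hψ ihg
      have hD' : GoodD (n'+1) ((plen γ₂ + plen δ) + 1)
          (.comp (.comp .down (.comp (.test ψ) γ₂)) (.comp (.test χ) δ)) :=
        goodD_congr (dpath_assoc ψ γ₂ _) hD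
      have hbnd : (plen γ₂ + plen δ) + 1 ≤
          plen (PathExpr.comp .down (.comp (.test ψ) γ₂)) + plen δ := by
        simp only [plen]
        omega
      have hDfin := goodD_mono hbnd hD'
      exact ⟨goodD_to_goodP hDfin, fun _ => hDfin⟩

end XPathMinus
set_option linter.unusedSectionVars false
set_option maxHeartbeats 4000000
namespace XPathMinus
variable {A : Type} {B : Type*} [Fintype A]

open NodeExpr PathExpr List

theorem ndec_type_type {n : ℕ} {t t' : NodeExpr A} (ht : t ∈ (NF A n).2)
    (ht' : t' ∈ (NF A n).2) : NDec t t' := by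
  by_cases h : t = t'
  · subst h; exact Or.inl (and_idem t)
  · exact Or.inr (type_disjoint ht ht' h)

theorem swd_ne_eps {g : PathExpr A} (h : startsWithDown g) : g ≠ .eps := by
  intro he; subst he; simp [startsWithDown] at h

/-- `ε` is a union of guarded normal forms at any level. -/
theorem goodP_eps (n : ℕ) : GoodP (A := A) n 0 .eps := by
  refine ⟨(NF A n).2.map fun t => (t, .eps), ?_, ?_⟩
  · intro p hp
    simp only [List.mem_map] at hp
    obtain ⟨t, htm, rfl⟩ := hp
    exact ⟨htm, eps_mem_PL n, by simp [plen]⟩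
  · have s1 : PDer (PathExpr.eps : PathExpr A) (bigUnion ((NF A n).2.map .test)) :=
      (PDer.prAx2.symm.trans (.congr_test (cover n))).trans (test_bigOr _)
    have s2 : PDer (bigUnion ((NF A n).2.map PathExpr.test))
        (bigUnion ((NF A n).2.map fun t => PathExpr.comp (.test t) .eps)) :=
      bigUnion_map_congr fun t _ => (PDer.isAx5r (.test t)).symm
    rw [List.map_map]
    exact (s1.trans s2).trans (.refl _)

theorem norm_main :
    (∀ φ : NodeExpr A, ∀ n, ndd φ ≤ n →
      ∃ l : List (NodeExpr A), (∀ t ∈ l, t ∈ (NF A n).2) ∧ NDer φ (bigOr l)) ∧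
    (∀ α : PathExpr A, ∀ n, pdd α ≤ n →
      GoodP n (plen α) α ∧ (startsWithDown α → GoodD n (plen α) α)) := by
  have key : ∀ N : ℕ, (∀ φ : NodeExpr A, sizeOf φ ≤ N → ∀ n, ndd φ ≤ n →
      ∃ l : List (NodeExpr A), (∀ t ∈ l, t ∈ (NF A n).2) ∧ NDer φ (bigOr l)) ∧
      (∀ α : PathExpr A, sizeOf α ≤ N → ∀ n, pdd α ≤ n →
        GoodP n (plen α) α ∧ (startsWithDown α → GoodD n (plen α) α)) := by
    intro N
    induction N with
    | zero =>
      constructor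
      · intro φ hφ; exfalso; cases φ <;> simp at hφ
      · intro α hα; exfalso; cases α <;> simp at hα
    | succ N ihN =>
      obtain ⟨IHn, IHp⟩ := ihN
      constructor
      · intro φ hφ n hndd
        cases φ with
        | lab a => exact select fun t ht => ndec_type_lab ht a
        | neg φ' =>
          have hs : sizeOf φ' ≤ N := by simp at hφ; omega
          obtain ⟨l, hl, hd⟩ := IHn φ' hs n (by simpa [ndd] using hndd)
          exact select fun t ht => ndec_neg (ndec_congr hd.symm (ndec_type_bigOr ht hl))
        | conj φ₁ φ₂ =>
          have hs1 : sizeOf φ₁ ≤ N := by simp at hφ; omega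
          have hs2 : sizeOf φ₂ ≤ N := by simp at hφ; omega
          have hn : ndd φ₁ ≤ n ∧ ndd φ₂ ≤ n := by
            simp only [ndd] at hndd; omega
          obtain ⟨l1, hl1, hd1⟩ := IHn φ₁ hs1 n hn.1
          obtain ⟨l2, hl2, hd2⟩ := IHn φ₂ hs2 n hn.2
          refine select fun t ht => ndec_conj ?_ ?_
          · exact ndec_congr hd1.symm (ndec_type_bigOr ht hl1)
          · exact ndec_congr hd2.symm (ndec_type_bigOr ht hl2)
        | diam α =>
          have hs : sizeOf α ≤ N := by simp at hφ; omega
          obtain ⟨⟨l, hl, hd⟩, -⟩ := IHp α hs n (by simpa [ndd] using hndd)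
          have hchain : NDer (.diam α) (bigOr (l.map fun p => .conj p.1 (.diam p.2))) := by
            have s1 := (NDer.congr_diam hd).trans
              (diam_bigUnion (l.map fun p => .comp (.test p.1) p.2))
            rw [List.map_map] at s1
            exact s1.trans (bigOr_map_congr fun p _ => diam_test_comp p.1 p.2)
          refine select fun t ht => ndec_congr hchain.symm (ndec_bigOr ?_)
          intro e he
          simp only [List.mem_map] at he
          obtain ⟨p, hp, rfl⟩ := he
          refine ndec_conj (ndec_type_type ht (hl p hp).1) ?_
          exact ndec_congr (NDer.eqAx6 p.2) (ndec_type_eq ht (hl p hp).2.1 (hl p hp).2.1)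
        | eqTest α β =>
          have hs1 : sizeOf α ≤ N := by simp at hφ; omega
          have hs2 : sizeOf β ≤ N := by simp at hφ; omega
          have hn : pdd α ≤ n ∧ pdd β ≤ n := by simp only [ndd] at hndd; omega
          obtain ⟨⟨l1, hl1, hd1⟩, -⟩ := IHp α hs1 n hn.1
          obtain ⟨⟨l2, hl2, hd2⟩, -⟩ := IHp β hs2 n hn.2
          have hchain : NDer (.eqTest α β)
              (bigOr ((l1.map fun p => PathExpr.comp (.test p.1) p.2).flatMap fun x =>
                (l2.map fun p => PathExpr.comp (.test p.1) p.2).map fun y => .eqTest x y)) :=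
            (NDer.congr_eqTest hd1 hd2).trans (eq_bigUnion_both _ _)
          refine select fun t ht => ndec_congr hchain.symm (ndec_bigOr ?_)
          intro e he
          simp only [List.mem_flatMap, List.mem_map] at he
          obtain ⟨x, ⟨p, hp, rfl⟩, e, ⟨q, hq, rfl⟩, rfl⟩ := he
          have hder : NDer (NodeExpr.eqTest (.comp (.test p.1) p.2) (.comp (.test q.1) q.2))
              (.conj p.1 (.conj q.1 (.eqTest q.2 p.2))) := by
            have s1 : NDer (NodeExpr.conj p.1 (.eqTest p.2 (.comp (.test q.1) q.2)))
                (.eqTest (.comp (.test p.1) p.2) (.comp (.test q.1) q.2)) :=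
              NDer.eqAx3 _ _ _
            have s2 : NDer (NodeExpr.eqTest p.2 (.comp (.test q.1) q.2))
                (.conj q.1 (.eqTest q.2 p.2)) := by
              have u1 : NDer (NodeExpr.eqTest p.2 (.comp (.test q.1) q.2))
                  (.eqTest (.comp (.test q.1) q.2) p.2) := NDer.eqAx1 _ _
              exact u1.trans (NDer.eqAx3 q.1 q.2 p.2).symm
            exact s1.symm.trans (andCongr (.refl _) s2)
          refine ndec_congr hder.symm ?_
          refine ndec_conj (ndec_type_type ht (hl1 p hp).1) ?_
          refine ndec_conj (ndec_type_type ht (hl2 q hq).1) ?_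
          exact ndec_type_eq ht (hl2 q hq).2.1 (hl1 p hp).2.1
      · intro α hα n hpdd
        cases α with
        | eps =>
          refine ⟨?_, fun h => by simp [startsWithDown] at h⟩
          have := goodP_eps (A := A) n
          simpa [plen] using this
        | down =>
          obtain ⟨n', rfl⟩ : ∃ n', n = n' + 1 := by
            refine ⟨n - 1, ?_⟩
            have : 1 ≤ n := by simpa [pdd] using hpdd
            omega
          have hD : GoodD (n'+1) (plen (PathExpr.down : PathExpr A)) (.down : PathExpr A) := by
            refine ⟨(NF A n').2.map fun t => .comp .down (.comp (.test t) .eps), ?_, ?_⟩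
            · intro β hβ
              simp only [List.mem_map] at hβ
              obtain ⟨t, htm, rfl⟩ := hβ
              refine ⟨?_, by simp [plen], trivial⟩
              rw [NF_succ_fst]
              refine List.mem_cons_of_mem _ ?_
              simp only [List.mem_flatMap, List.mem_map]
              exact ⟨t, htm, .eps, eps_mem_PL n', rfl⟩
            · have s1 : PDer (PathExpr.down : PathExpr A)
                  (.comp .down (bigUnion ((NF A n').2.map .test))) :=
                (PDer.isAx5r .down).symm.trans (.congr_comp (.refl _)
                  ((PDer.prAx2.symm.trans (.congr_test (cover n'))).trans (test_bigOr _)))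
              have s2 := s1.trans (comp_bigUnion_r ((NF A n').2.map .test) .down)
              rw [List.map_map] at s2
              refine s2.trans (bigUnion_map_congr fun t _ => ?_)
              exact .congr_comp (.refl _) (PDer.isAx5r (.test t)).symm
          exact ⟨goodD_to_goodP hD, fun _ => hD⟩
        | test φ =>
          have hs : sizeOf φ ≤ N := by simp at hα; omega
          obtain ⟨l, hl, hd⟩ := IHn φ hs n (by simpa [pdd] using hpdd)
          refine ⟨?_, fun h => by simp [startsWithDown] at h⟩
          refine ⟨l.map fun t => (t, .eps), ?_, ?_⟩
          · intro p hp
            simp only [List.mem_map] at hp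
            obtain ⟨t, htm, rfl⟩ := hp
            exact ⟨hl t htm, eps_mem_PL n, by simp [plen]⟩
          · have s1 : PDer (PathExpr.test φ) (bigUnion (l.map .test)) :=
              (PDer.congr_test hd).trans (test_bigOr l)
            have s2 : PDer (bigUnion (l.map PathExpr.test))
                (bigUnion (l.map fun t => PathExpr.comp (.test t) .eps)) :=
              bigUnion_map_congr fun t _ => (PDer.isAx5r (.test t)).symm
            rw [List.map_map]
            exact s1.trans s2
        | union γ δ =>
          have hs1 : sizeOf γ ≤ N := by simp at hα; omega
          have hs2 : sizeOf δ ≤ N := by simp at hα; omega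
          have hn : pdd γ ≤ n ∧ pdd δ ≤ n := by simp only [pdd] at hpdd; omega
          obtain ⟨g1, -⟩ := IHp γ hs1 n hn.1
          obtain ⟨g2, -⟩ := IHp δ hs2 n hn.2
          refine ⟨?_, fun h => by simp [startsWithDown] at h⟩
          have : plen (PathExpr.union γ δ) = max (plen γ) (plen δ) := by simp [plen]
          rw [this]
          exact goodP_union (goodP_mono (le_max_left _ _) g1)
            (goodP_mono (le_max_right _ _) g2)
        | comp γ δ =>
          have hs1 : sizeOf γ ≤ N := by simp at hα; omega
          have hs2 : sizeOf δ ≤ N := by simp at hα; omega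
          have hn : pdd γ ≤ n ∧ pdd δ ≤ n ∧ plen γ + pdd δ ≤ n := by
            simp only [pdd] at hpdd; omega
          obtain ⟨⟨lγ, hlγ, hdγ⟩, hpureγ⟩ := IHp γ hs1 n hn.1
          obtain ⟨⟨lδ, hlδ, hdδ⟩, -⟩ := IHp δ hs2 (pdd δ) le_rfl
          have hplen : plen (PathExpr.comp γ δ) = plen γ + plen δ := by simp [plen]
          constructor
          · -- pairs part
            rw [hplen]
            have hchain : PDer (PathExpr.comp γ δ)
                (bigUnion ((lγ.map fun p => PathExpr.comp (.test p.1) p.2).map fun x =>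
                  bigUnion ((lδ.map fun p => PathExpr.comp (.test p.1) p.2).map fun y =>
                    .comp x y))) :=
              ((PDer.congr_comp hdγ hdδ).trans (comp_bigUnion_both _ _)).trans
                (bigUnion_flatMap _ _)
            refine goodP_congr hchain (goodP_bigUnion ?_)
            intro x hx
            simp only [List.mem_map] at hx
            obtain ⟨p, hp, rfl⟩ := hx
            refine goodP_bigUnion ?_
            intro y hy
            simp only [List.mem_map] at hy
            obtain ⟨q, hq, rfl⟩ := hy
            have hlemB := (lemB n p.2 (hlγ p hp).2.1 (pdd δ) q.1 q.2
              (hlδ q hq).1 (hlδ q hq).2.1 (by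
                have := (hlγ p hp).2.2
                omega)).1
            have hinner : GoodP n (plen p.2 + plen q.2)
                (.comp (.test p.1) (.comp p.2 (.comp (.test q.1) q.2))) :=
              goodP_test_comp (hlγ p hp).1 hlemB
            have hre : PDer
                (PathExpr.comp (.comp (.test p.1) p.2) (.comp (.test q.1) q.2))
                (.comp (.test p.1) (.comp p.2 (.comp (.test q.1) q.2))) :=
              (PDer.isAx4 _ _ _).symm
            refine goodP_mono ?_ (goodP_congr hre hinner)
            have := (hlγ p hp).2.2
            have := (hlδ q hq).2.2
            omega
          · -- pure part
            intro hsd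
            have hsdγ : startsWithDown γ := by simpa [startsWithDown] using hsd
            obtain ⟨lγ', hlγ', hdγ'⟩ := hpureγ hsdγ
            rw [hplen]
            have hchain : PDer (PathExpr.comp γ δ)
                (bigUnion (lγ'.map fun g =>
                  bigUnion ((lδ.map fun p => PathExpr.comp (.test p.1) p.2).map fun y =>
                    .comp g y))) := by
              have := ((PDer.congr_comp hdγ' hdδ).trans (comp_bigUnion_both _ _)).trans
                (bigUnion_flatMap _ _)
              exact this
            refine goodD_congr hchain (goodD_bigUnion ?_)
            intro g hg
            refine goodD_bigUnion ?_
            intro y hy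
            simp only [List.mem_map] at hy
            obtain ⟨q, hq, rfl⟩ := hy
            have hlemB := (lemB n g (hlγ' g hg).1 (pdd δ) q.1 q.2
              (hlδ q hq).1 (hlδ q hq).2.1 (by
                have := (hlγ' g hg).2.1
                omega)).2 (swd_ne_eps (hlγ' g hg).2.2)
            refine goodD_mono ?_ hlemB
            have := (hlγ' g hg).2.1
            have := (hlδ q hq).2.2
            omega
  refine ⟨fun φ => (key (sizeOf φ)).1 φ le_rfl, fun α => (key (sizeOf α)).2 α le_rfl⟩

end XPathMinus
/-- Normal form theorem for `XPath↓⁻`. -/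
theorem XPathMinus.normal_form {A : Type} [Fintype A] (hA : 1 < Fintype.card A) :
    (∀ (n : ℕ) (φ : NodeExpr A), NConsistent φ → ndd φ = n →
      ∃ l : List (NodeExpr A), l ≠ [] ∧ (∀ ψ ∈ l, ψ ∈ Nnf A n) ∧ NDer φ (bigOr l)) ∧
    (∀ (n : ℕ) (α : PathExpr A), PConsistent α → pdd α = n →
      (∃ l : List (NodeExpr A × PathExpr A), l ≠ [] ∧
        (∀ p ∈ l, p.1 ∈ Nnf A n ∧ p.2 ∈ Pnf A n) ∧
        PDer α (bigUnion (l.map fun p => PathExpr.comp (.test p.1) p.2))) ∧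
      ((α = PathExpr.eps ∨ startsWithDown α) →
        ∃ l : List (PathExpr A), l ≠ [] ∧ (∀ β ∈ l, β ∈ Pnf A n) ∧
          PDer α (bigUnion l))) := by
  constructor
  · intro n φ hcons hndd
    obtain ⟨l, hl, hd⟩ := norm_main.1 φ n (le_of_eq hndd)
    refine ⟨l, ?_, fun ψ hψ => hl ψ hψ, hd⟩
    rintro rfl
    exact hcons hd
  · intro n α hcons hpdd
    obtain ⟨⟨l, hl, hd⟩, hpure⟩ := norm_main.2 α n (le_of_eq hpdd)
    constructor
    · refine ⟨l, ?_, fun p hp => ⟨(hl p hp).1, (hl p hp).2.1⟩, hd⟩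
      rintro rfl
      exact hcons hd
    · intro hcase
      rcases hcase with rfl | hsd
      · refine ⟨[.eps], by simp, fun β hβ => ?_, (bigUnion_single _).symm⟩
        rw [List.mem_singleton.1 hβ]
        exact eps_mem_PL n
      · obtain ⟨l', hl', hd'⟩ := hpure hsd
        refine ⟨l', ?_, fun β hβ => (hl' β hβ).1, hd'⟩
        rintro rfl
        exact hcons hd'
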